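/- arXiv:2510.01277 — 6 statements merged into one kernel-verified Lean document; each statement's English description precedes it below -/
import Mathlib

section
/- For every positive integer n, ∑_{k=1}^{n} δ_s(k)·ω(n−k) = ∑_{m=1}^{n} λ(m) · ( ∑_{j=0}^{⌊(n−m)/m⌋} ω((n−m) − j·m) ), where λ is Liouville's function. -/
open scoped Classical

/-- The pentagonal-number coefficient function `ω`: `ω 0 = 1`,
`ω m = (-1)^k` if `m = (3k² + k)/2` or `m = (3k² - k)/2` for a positive integer `k`,
and `ω m = 0` otherwise (in particular for negative `m`). -/
noncomputable def pentaCoeff (m : ℤ) : ℤ :=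
  if m = 0 then 1
  else if h : ∃ k : ℕ, 0 < k ∧ (2 * m = 3 * (k : ℤ) ^ 2 + k ∨ 2 * m = 3 * (k : ℤ) ^ 2 - k)
  then (-1) ^ h.choose
  else 0

/-- The inner sum `∑_{j=0}^{⌊(n-m)/m⌋} ω((n-m) - j·m)`. -/
noncomputable def pentaSum (n m : ℕ) : ℤ :=
  ∑ j ∈ Finset.range ((n - m) / m + 1), pentaCoeff (((n : ℤ) - m) - j * m)

/-- Liouville's function `λ(n) = (-1)^Ω(n)` where `Ω(n)` is the number of prime factors of `n`
counted with multiplicity; in particular `λ(1) = 1`. -/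
def liouville (m : ℕ) : ℤ := (-1) ^ m.primeFactorsList.length

open ArithmeticFunction hiding liouville
open Finset
open scoped ArithmeticFunction.zeta

noncomputable def Lfun : ArithmeticFunction ℤ :=
  ⟨fun n => if n = 0 then 0 else (-1) ^ n.primeFactorsList.length, by simp⟩

lemma Lfun_apply {n : ℕ} (hn : n ≠ 0) : Lfun n = (-1) ^ n.primeFactorsList.length := if_neg hn

lemma Lfun_mult : Lfun.IsMultiplicative := by
  constructor
  · rw [Lfun_apply one_ne_zero]; simp
  · intro m n _
    rcases eq_or_ne m 0 with rfl | hm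
    · simp [Lfun]
    rcases eq_or_ne n 0 with rfl | hn
    · simp [Lfun]
    rw [Lfun_apply hm, Lfun_apply hn, Lfun_apply (mul_ne_zero hm hn), ← pow_add]
    congr 1
    have := ArithmeticFunction.cardFactors_mul hm hn
    simpa [ArithmeticFunction.cardFactors_apply] using this

noncomputable def sqInd : ArithmeticFunction ℤ :=
  ⟨fun n => if n ≠ 0 ∧ IsSquare n then 1 else 0, by simp⟩

lemma sqInd_apply (n : ℕ) : sqInd n = if n ≠ 0 ∧ IsSquare n then 1 else 0 := rfl

lemma coprime_isSquare_mul {m n : ℕ} (h : Nat.Coprime m n) (hm : m ≠ 0) (hn : n ≠ 0) :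
    IsSquare (m * n) ↔ IsSquare m ∧ IsSquare n := by
  constructor
  · rintro ⟨c, hc⟩
    have hc2 : m * n = c ^ 2 := by rw [hc, sq]
    have h1 : IsUnit (gcd m n) := by
      rw [Nat.isUnit_iff]; exact h
    obtain ⟨d, hd⟩ := exists_eq_pow_of_mul_eq_pow h1 hc2
    have h1' : IsUnit (gcd n m) := by rw [gcd_comm]; exact h1
    obtain ⟨e, he⟩ := exists_eq_pow_of_mul_eq_pow h1' (by rw [mul_comm] at hc2; exact hc2)
    exact ⟨⟨d, by rw [hd, sq]⟩, ⟨e, by rw [he, sq]⟩⟩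
  · rintro ⟨⟨a, ha⟩, ⟨b, hb⟩⟩
    exact ⟨a * b, by rw [ha, hb]; ring⟩

lemma isSquare_prime_pow {p k : ℕ} (hp : p.Prime) : IsSquare (p ^ k) ↔ Even k := by
  constructor
  · rintro ⟨r, hr⟩
    have hr0 : r ≠ 0 := by
      rintro rfl
      exact pow_ne_zero k hp.pos.ne' (by simpa using hr)
    have := congrArg (fun x : ℕ => x.factorization p) hr
    simp only [hp.factorization_pow, Finsupp.single_eq_same,
      Nat.factorization_mul hr0 hr0, Finsupp.add_apply] at this
    exact ⟨_, this⟩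
  · rintro ⟨t, rfl⟩
    exact ⟨p ^ t, by ring⟩

lemma sqInd_mult : sqInd.IsMultiplicative := by
  constructor
  · simp [sqInd_apply]
  · intro m n h
    rcases eq_or_ne m 0 with rfl | hm
    · simp [sqInd_apply]
    rcases eq_or_ne n 0 with rfl | hn
    · simp [sqInd_apply]
    simp only [sqInd_apply, coprime_isSquare_mul h hm hn]
    by_cases h1 : IsSquare m <;> by_cases h2 : IsSquare n <;>
      simp [h1, h2, hm, hn, mul_ne_zero hm hn]

lemma sum_liouville_divisors (n : ℕ) (hn : n ≠ 0) :
    ∑ d ∈ n.divisors, liouville d = if IsSquare n then 1 else 0 := by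
  have key : (↑(ζ : ArithmeticFunction ℕ) * Lfun) = sqInd := by
    rw [ArithmeticFunction.IsMultiplicative.eq_iff_eq_on_prime_powers _
      (isMultiplicative_zeta.natCast.mul Lfun_mult) _ sqInd_mult]
    intro p i hp
    rw [ArithmeticFunction.coe_zeta_mul_apply, Nat.sum_divisors_prime_pow hp]
    have h1 : ∀ x ∈ range (i + 1), Lfun (p ^ x) = (-1 : ℤ) ^ x := by
      intro x _
      rw [Lfun_apply (pow_ne_zero _ hp.pos.ne'), hp.primeFactorsList_pow, List.length_replicate]
    rw [Finset.sum_congr rfl h1, neg_one_geom_sum, sqInd_apply]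
    have hpk : p ^ i ≠ 0 := pow_ne_zero _ hp.pos.ne'
    rcases Nat.even_or_odd i with he | ho
    · simp [Nat.even_add_one, Nat.not_even_iff_odd, he, hpk, hp.ne_zero, (isSquare_prime_pow hp).2 he]
    · have hns : ¬ IsSquare (p ^ i) := fun hs =>
        (Nat.not_even_iff_odd.2 ho) ((isSquare_prime_pow hp).1 hs)
      simp [Nat.even_add_one, Nat.not_even_iff_odd, ho, hpk, hns]
  have h2 : (↑(ζ : ArithmeticFunction ℕ) * Lfun) n = sqInd n := by rw [key]
  rw [ArithmeticFunction.coe_zeta_mul_apply] at h2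
  have h3 : ∀ d ∈ n.divisors, Lfun d = liouville d := by
    intro d hd
    rw [Lfun_apply (Nat.pos_of_mem_divisors hd).ne']
    rfl
  rw [Finset.sum_congr rfl h3] at h2
  rw [h2, sqInd_apply]
  simp [hn]

theorem euler_type_liouville (n : ℕ) (hn : 0 < n) :
    ∑ k ∈ Finset.Icc 1 n, (if IsSquare k then (1 : ℤ) else 0) * pentaCoeff ((n : ℤ) - k) =
      ∑ m ∈ Finset.Icc 1 n, liouville m * pentaSum n m := by
  have rhs : ∑ m ∈ Finset.Icc 1 n, liouville m * pentaSum n m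
      = ∑ x ∈ (Finset.Icc 1 n).sigma (fun m => Finset.range ((n - m) / m + 1)),
          liouville x.1 * pentaCoeff (((n : ℤ) - x.1) - x.2 * x.1) := by
    rw [Finset.sum_sigma]
    exact Finset.sum_congr rfl fun m _ => by rw [pentaSum, Finset.mul_sum]
  have mid : ∑ x ∈ (Finset.Icc 1 n).sigma (fun m => Finset.range ((n - m) / m + 1)),
          liouville x.1 * pentaCoeff (((n : ℤ) - x.1) - x.2 * x.1)
      = ∑ y ∈ (Finset.Icc 1 n).sigma (fun k => k.divisors),
          liouville y.2 * pentaCoeff ((n : ℤ) - y.1) := by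
    refine Finset.sum_nbij' (fun x => ⟨x.1 * (x.2 + 1), x.1⟩) (fun y => ⟨y.2, y.1 / y.2 - 1⟩)
      ?_ ?_ ?_ ?_ ?_
    · rintro ⟨m, j⟩ hx
      simp only [Finset.mem_sigma, Finset.mem_Icc, Finset.mem_range] at hx
      obtain ⟨⟨hm1, hmn⟩, hj⟩ := hx
      have hm0 : 0 < m := hm1
      have hjle : j * m ≤ n - m := (Nat.le_div_iff_mul_le hm0).1 (Nat.lt_succ_iff.1 hj)
      simp only [Finset.mem_sigma, Finset.mem_Icc, Nat.mem_divisors]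
      refine ⟨⟨Nat.one_le_iff_ne_zero.2 (by positivity), ?_⟩, ⟨⟨j + 1, rfl⟩, by positivity⟩⟩
      have hmj : m * (j + 1) = j * m + m := by ring
      omega
    · rintro ⟨k, m⟩ hy
      simp only [Finset.mem_sigma, Finset.mem_Icc, Nat.mem_divisors] at hy
      obtain ⟨⟨hk1, hkn⟩, hmk, hk0⟩ := hy
      have hm0 : 0 < m := Nat.pos_of_ne_zero fun h => hk0 (by simpa [h] using hmk)
      have hmk' : m ≤ k := Nat.le_of_dvd (Nat.pos_of_ne_zero hk0) hmk
      obtain ⟨t, rfl⟩ := hmk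
      have ht : m * t / m = t := Nat.mul_div_cancel_left t hm0
      simp only [Finset.mem_sigma, Finset.mem_Icc, Finset.mem_range, ht]
      refine ⟨⟨hm0, le_trans hmk' hkn⟩, ?_⟩
      have h1 : (t - 1) * m = t * m - m := Nat.sub_one_mul t m
      have h2 : t * m ≤ n := by rw [mul_comm]; exact hkn
      have h3 : (t - 1) * m ≤ n - m := by omega
      exact Nat.lt_succ_of_le ((Nat.le_div_iff_mul_le hm0).2 h3)
    · rintro ⟨m, j⟩ hx
      simp only [Finset.mem_sigma, Finset.mem_Icc, Finset.mem_range] at hx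
      have hm0 : 0 < m := hx.1.1
      simp [Nat.mul_div_cancel_left _ hm0]
    · rintro ⟨k, m⟩ hy
      simp only [Finset.mem_sigma, Finset.mem_Icc, Nat.mem_divisors] at hy
      obtain ⟨⟨hk1, hkn⟩, hmk, hk0⟩ := hy
      have hm0 : 0 < m := Nat.pos_of_ne_zero fun h => hk0 (by simpa [h] using hmk)
      have hdiv1 : 1 ≤ k / m :=
        (Nat.one_le_div_iff hm0).2 (Nat.le_of_dvd (Nat.pos_of_ne_zero hk0) hmk)
      have h1 : k / m - 1 + 1 = k / m := by omega
      show (⟨m * (k / m - 1 + 1), m⟩ : Σ _ : ℕ, ℕ) = ⟨k, m⟩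
      rw [h1, Nat.mul_div_cancel' hmk]
    · rintro ⟨m, j⟩ _
      congr 1
      congr 1
      push_cast
      ring
  symm
  rw [rhs, mid, Finset.sum_sigma]
  refine Finset.sum_congr rfl fun k hk => ?_
  dsimp only
  rw [← Finset.sum_mul, sum_liouville_divisors k]
  have := (Finset.mem_Icc.1 hk).1
  omega
end

section
/- For every integer n > 1, ω(n−1) = ∑_{m=1}^{n} μ(m) · ( ∑_{j=0}^{⌊(n−m)/m⌋} ω((n−m) − j·m) ), where μ is the Möbius function. -/
open scoped Classical

open Finset

lemma pentaSum_eq (n m : ℕ) (hm : 1 ≤ m) (hmn : m ≤ n) :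
    pentaSum n m = ∑ k ∈ Icc 1 (n / m), pentaCoeff ((n : ℤ) - k * m) := by
  have hdiv : n / m = (n - m) / m + 1 := by
    conv_lhs => rw [← Nat.sub_add_cancel hmn]
    rw [Nat.add_div_right _ hm]
  rw [← Finset.Ico_add_one_right_eq_Icc, Finset.sum_Ico_eq_sum_range, hdiv]
  simp only [Nat.add_sub_cancel]
  apply Finset.sum_congr rfl
  intro j _
  congr 1
  push_cast
  ring

lemma sum_moebius_divisors (d : ℕ) :
    ∑ m ∈ d.divisors, (ArithmeticFunction.moebius m : ℤ) = if d = 1 then 1 else 0 := by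
  have := ArithmeticFunction.coe_mul_zeta_apply
    (f := (ArithmeticFunction.moebius : ArithmeticFunction ℤ)) (x := d)
  rw [ArithmeticFunction.moebius_mul_coe_zeta] at this
  rw [← this, ArithmeticFunction.one_apply]

theorem euler_type_moebius (n : ℕ) (hn : 1 < n) :
    pentaCoeff ((n : ℤ) - 1) =
      ∑ m ∈ Finset.Icc 1 n, (ArithmeticFunction.moebius m : ℤ) * pentaSum n m := by
  have h1 : ∀ m ∈ Icc 1 n,
      (ArithmeticFunction.moebius m : ℤ) * pentaSum n m
      = ∑ k ∈ Icc 1 (n / m), (ArithmeticFunction.moebius m : ℤ) * pentaCoeff ((n : ℤ) - k * m) := by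
    intro m hm
    rw [mem_Icc] at hm
    rw [pentaSum_eq n m hm.1 hm.2, Finset.mul_sum]
  rw [Finset.sum_congr rfl h1,
    ← Finset.sum_sigma (Icc 1 n) (fun m => Icc 1 (n / m))
      (fun p => (ArithmeticFunction.moebius p.1 : ℤ) * pentaCoeff ((n : ℤ) - p.2 * p.1))]
  have h2 : ∑ p ∈ (Icc 1 n).sigma (fun m => Icc 1 (n / m)),
        (ArithmeticFunction.moebius p.1 : ℤ) * pentaCoeff ((n : ℤ) - p.2 * p.1)
      = ∑ p ∈ (Icc 1 n).sigma (fun d => d.divisors),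
        (ArithmeticFunction.moebius p.2 : ℤ) * pentaCoeff ((n : ℤ) - p.1) := by
    apply Finset.sum_nbij' (i := fun p => ⟨p.1 * p.2, p.1⟩) (j := fun p => ⟨p.2, p.1 / p.2⟩)
    · rintro ⟨m, k⟩ hp
      simp only [mem_sigma, mem_Icc] at hp ⊢
      obtain ⟨⟨hm1, hmn⟩, hk1, hk2⟩ := hp
      have hmk : m * k ≤ n := by
        rw [mul_comm]; exact (Nat.le_div_iff_mul_le (by omega)).mp hk2
      refine ⟨⟨Nat.one_le_iff_ne_zero.mpr (by positivity), hmk⟩, ?_⟩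
      exact Nat.mem_divisors.mpr ⟨Dvd.intro k rfl, by positivity⟩
    · rintro ⟨d, m⟩ hp
      simp only [mem_sigma, mem_Icc, Nat.mem_divisors] at hp ⊢
      obtain ⟨⟨hd1, hdn⟩, hmd, hd0⟩ := hp
      have hm0 : 0 < m := Nat.pos_of_dvd_of_pos hmd (by omega)
      have hmd' : m ≤ d := Nat.le_of_dvd (by omega) hmd
      refine ⟨⟨hm0, hmd'.trans hdn⟩, ?_, Nat.div_le_div_right hdn⟩
      exact Nat.one_le_div_iff hm0 |>.mpr hmd'
    · rintro ⟨m, k⟩ hp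
      simp only [mem_sigma, mem_Icc] at hp
      simp [Nat.mul_div_cancel_left _ (by omega : 0 < m)]
    · rintro ⟨d, m⟩ hp
      simp only [mem_sigma, mem_Icc, Nat.mem_divisors] at hp
      simp [Nat.mul_div_cancel' hp.2.1]
    · rintro ⟨m, k⟩ _
      congr 2
      push_cast
      ring
  rw [h2, Finset.sum_sigma]
  have h3 : ∀ d ∈ Icc 1 n,
      (∑ m ∈ d.divisors, (ArithmeticFunction.moebius m : ℤ) * pentaCoeff ((n : ℤ) - d))
      = (if d = 1 then 1 else 0) * pentaCoeff ((n : ℤ) - d) := by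
    intro d _
    rw [← Finset.sum_mul, sum_moebius_divisors]
  rw [Finset.sum_congr rfl h3]
  simp only [ite_mul, one_mul, zero_mul]
  rw [Finset.sum_ite_eq' (Icc 1 n) 1 (fun d => pentaCoeff ((n : ℤ) - d))]
  simp [mem_Icc, hn.le]
end

section
/- Let c_ψ(m) denote the number of relatively prime compositions of m, i.e., ordered sequences (a_1, …, a_k) of positive integers summing to m with gcd(a_1, …, a_k) = 1. Then for every positive integer n, ∑_{k=1}^{n} 2^{k−1}·ω(n−k) = ∑_{m=1}^{n} c_ψ(m) · ( ∑_{j=0}^{⌊(n−m)/m⌋} ω((n−m) − j·m) ). -/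
open scoped Classical

/-- The number of relatively prime compositions of `m`, i.e. ordered sequences of
positive integers summing to `m` whose greatest common divisor is `1`. -/
noncomputable def relPrimeCompositions (m : ℕ) : ℕ :=
  ((Finset.univ : Finset (Composition m)).filter
    fun c => (c.blocks : Multiset ℕ).gcd = 1).card

lemma list_sum_map_mul (g : ℕ) (l : List ℕ) : (l.map (g * ·)).sum = g * l.sum := by
  induction l with
  | nil => simp
  | cons a t ih => simp [ih, Nat.mul_add]

noncomputable def scaleComp (g : ℕ) (hg : 0 < g) {m : ℕ} (c : Composition m) :
    Composition (g * m) where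
  blocks := c.blocks.map (g * ·)
  blocks_pos := by
    intro i hi
    simp only [List.mem_map] at hi
    obtain ⟨a, ha, rfl⟩ := hi
    exact Nat.mul_pos hg (c.blocks_pos ha)
  blocks_sum := by rw [list_sum_map_mul, c.blocks_sum]

lemma scaleComp_gcd (g : ℕ) (hg : 0 < g) {m : ℕ} (c : Composition m) :
    ((scaleComp g hg c).blocks : Multiset ℕ).gcd = g * (c.blocks : Multiset ℕ).gcd := by
  show ((c.blocks.map (g * ·) : List ℕ) : Multiset ℕ).gcd = _
  rw [← Multiset.map_coe, Multiset.gcd_map_mul]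
  simp

lemma card_gcd_filter (g m : ℕ) (hg : 0 < g) :
    relPrimeCompositions m =
    ((Finset.univ : Finset (Composition (g * m))).filter
      (fun c => (c.blocks : Multiset ℕ).gcd = g)).card := by
  rw [relPrimeCompositions]
  refine Finset.card_bij (fun c _ => scaleComp g hg c) ?_ ?_ ?_
  · intro c hc
    simp only [Finset.mem_filter, Finset.mem_univ, true_and] at hc ⊢
    rw [scaleComp_gcd, hc, mul_one]
  · intro c1 h1 c2 h2 heq
    have : c1.blocks.map (g * ·) = c2.blocks.map (g * ·) := congrArg Composition.blocks heq
    have hinj : Function.Injective (g * ·) := fun a b h => Nat.eq_of_mul_eq_mul_left hg h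
    exact Composition.ext (List.map_injective_iff.mpr hinj this)
  · intro c hc
    simp only [Finset.mem_filter, Finset.mem_univ, true_and] at hc
    have hdvd : ∀ b ∈ c.blocks, g ∣ b := by
      intro b hb
      rw [← hc]
      exact Multiset.gcd_dvd (by exact_mod_cast hb)
    set l : List ℕ := c.blocks.map (· / g) with hl
    have h1 : l.map (g * ·) = c.blocks := by
      rw [hl, List.map_map]
      apply List.map_congr_left ?_ |>.trans (List.map_id _)
      intro b hb
      exact Nat.mul_div_cancel' (hdvd b hb)
    have hsum : l.sum = m := by
      have := list_sum_map_mul g l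
      rw [h1, c.blocks_sum] at this
      exact (Nat.eq_of_mul_eq_mul_left hg this.symm)
    refine ⟨⟨l, ?_, hsum⟩, ?_, ?_⟩
    · intro i hi
      rw [hl] at hi
      simp only [List.mem_map] at hi
      obtain ⟨b, hb, rfl⟩ := hi
      exact Nat.div_pos (Nat.le_of_dvd (c.blocks_pos hb) (hdvd b hb)) hg
    · simp only [Finset.mem_filter, Finset.mem_univ, true_and]
      have hgcd : g * ((l : Multiset ℕ)).gcd = g := by
        have := scaleComp_gcd g hg (⟨l, by
          intro i hi
          rw [hl] at hi
          simp only [List.mem_map] at hi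
          obtain ⟨b, hb, rfl⟩ := hi
          exact Nat.div_pos (Nat.le_of_dvd (c.blocks_pos hb) (hdvd b hb)) hg, hsum⟩ : Composition m)
        rw [← this]
        show (((l.map (g * ·) : List ℕ)) : Multiset ℕ).gcd = g
        rw [h1, hc]
      exact Nat.eq_of_mul_eq_mul_left hg (by rw [hgcd, mul_one])
    · apply Composition.ext
      exact h1

lemma two_pow_eq (k : ℕ) (hk : 0 < k) :
    (2 : ℕ) ^ (k - 1) = ∑ m ∈ k.divisors, relPrimeCompositions m := by
  rw [← Nat.sum_div_divisors k relPrimeCompositions, ← composition_card, ← Finset.card_univ]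
  rw [Finset.card_eq_sum_card_fiberwise
    (f := fun c : Composition k => (c.blocks : Multiset ℕ).gcd) (t := k.divisors) ?_]
  · refine Finset.sum_congr rfl fun g hg => ?_
    have hg0 : 0 < g := Nat.pos_of_mem_divisors hg
    obtain ⟨m, rfl⟩ := (Nat.mem_divisors.mp hg).1
    rw [Nat.mul_div_cancel_left m hg0, ← card_gcd_filter g m hg0]
  · intro c _
    have hsum : (c.blocks : Multiset ℕ).sum = k := by
      rw [Multiset.sum_coe, c.blocks_sum]
    rw [Finset.mem_coe, Nat.mem_divisors]
    refine ⟨?_, hk.ne'⟩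
    have h := Multiset.dvd_sum (fun b hb => Multiset.gcd_dvd hb (s := (c.blocks : Multiset ℕ)))
    rwa [hsum] at h


lemma penta_inner_sum (n m : ℕ) (hm : 1 ≤ m) (hmn : m ≤ n) :
    ∑ k ∈ (Finset.Icc 1 n).filter (fun k => m ∣ k), pentaCoeff ((n : ℤ) - k) =
      pentaSum n m := by
  rw [pentaSum]
  have hm0 : 0 < m := hm
  refine Finset.sum_bij' (fun k _ => k / m - 1) (fun j _ => m * (j + 1)) ?_ ?_ ?_ ?_ ?_
  · intro k hk
    simp only [Finset.mem_filter, Finset.mem_Icc] at hk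
    obtain ⟨⟨hk1, hkn⟩, hdvd⟩ := hk
    have hq1 : 1 ≤ k / m := (Nat.one_le_div_iff hm0).mpr (Nat.le_of_dvd hk1 hdvd)
    rw [Finset.mem_range, Nat.lt_succ_iff, Nat.le_div_iff_mul_le hm0, Nat.le_sub_iff_add_le hmn]
    have heq : (k / m - 1) * m + m = k / m * m := by
      cases' Nat.exists_eq_add_of_le hq1 with q hq
      rw [hq]
      have h1 : 1 + q - 1 = q := by omega
      rw [h1]; ring
    rw [heq, Nat.div_mul_cancel hdvd]
    exact hkn
  · intro j hj
    simp only [Finset.mem_range, Nat.lt_succ_iff] at hj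
    rw [Nat.le_div_iff_mul_le hm0, Nat.le_sub_iff_add_le hmn] at hj
    simp only [Finset.mem_filter, Finset.mem_Icc]
    refine ⟨⟨Nat.one_le_iff_ne_zero.mpr (by positivity), by nlinarith⟩, ⟨j + 1, rfl⟩⟩
  · intro k hk
    simp only [Finset.mem_filter, Finset.mem_Icc] at hk
    obtain ⟨⟨hk1, hkn⟩, hdvd⟩ := hk
    have hq1 : 1 ≤ k / m := (Nat.one_le_div_iff hm0).mpr (Nat.le_of_dvd hk1 hdvd)
    show m * (k / m - 1 + 1) = k
    rw [Nat.sub_add_cancel hq1, Nat.mul_div_cancel' hdvd]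
  · intro j hj
    show m * (j + 1) / m - 1 = j
    rw [Nat.mul_div_cancel_left _ hm0, Nat.add_sub_cancel]
  · intro k hk
    simp only [Finset.mem_filter, Finset.mem_Icc] at hk
    obtain ⟨⟨hk1, hkn⟩, hdvd⟩ := hk
    obtain ⟨q, rfl⟩ := hdvd
    have hq1 : 1 ≤ q := by
      by_contra h
      push_neg at h
      interval_cases q <;> omega
    congr 1
    show (n : ℤ) - (m * q : ℕ) = (n : ℤ) - m - ((m * q / m - 1 : ℕ) : ℤ) * m
    rw [Nat.mul_div_cancel_left q hm0, Nat.cast_sub hq1]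
    push_cast
    ring

theorem euler_type_relPrimeCompositions (n : ℕ) (hn : 0 < n) :
    ∑ k ∈ Finset.Icc 1 n, (2 : ℤ) ^ (k - 1) * pentaCoeff ((n : ℤ) - k) =
      ∑ m ∈ Finset.Icc 1 n, (relPrimeCompositions m : ℤ) * pentaSum n m := by
  have step1 : ∀ k ∈ Finset.Icc 1 n,
      (2 : ℤ) ^ (k - 1) * pentaCoeff ((n : ℤ) - k) =
      ∑ m ∈ Finset.Icc 1 n,
        (if m ∣ k then (relPrimeCompositions m : ℤ) * pentaCoeff ((n : ℤ) - k) else 0) := by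
    intro k hk
    simp only [Finset.mem_Icc] at hk
    rw [← Finset.sum_filter, ← Finset.sum_mul]
    congr 1
    have hdiv : (Finset.Icc 1 n).filter (· ∣ k) = k.divisors := by
      ext m
      simp only [Finset.mem_filter, Finset.mem_Icc, Nat.mem_divisors]
      constructor
      · rintro ⟨⟨_, _⟩, hd⟩; exact ⟨hd, by omega⟩
      · rintro ⟨hd, _⟩
        exact ⟨⟨Nat.one_le_iff_ne_zero.mpr (by rintro rfl; simp at hd; omega),
          (Nat.le_of_dvd (by omega) hd).trans hk.2⟩, hd⟩
    rw [hdiv]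
    have := two_pow_eq k (by omega)
    have h2 : ((2 : ℕ) ^ (k - 1) : ℤ) = ∑ m ∈ k.divisors, (relPrimeCompositions m : ℤ) := by
      exact_mod_cast congrArg (Nat.cast : ℕ → ℤ) this
    push_cast at h2 ⊢
    rw [h2]
  rw [Finset.sum_congr rfl step1, Finset.sum_comm]
  refine Finset.sum_congr rfl fun m hm => ?_
  simp only [Finset.mem_Icc] at hm
  rw [← Finset.sum_filter, ← penta_inner_sum n m hm.1 hm.2, Finset.mul_sum]
end

section
/- For every nonnegative integer n, ∑_{k=0}^{n} (−1)^k · qq(k) · ω(n−k) equals 1 if n = 0; equals 2 if n is a nonzero perfect square and n is even; equals −2 if n is a nonzero perfect square and n is odd; and equals 0 otherwise. Here qq(k) is the number of partitions of k into pairwise distinct odd parts. -/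
open scoped Classical

/-- `distinctOddPartitions k` is the number of partitions of `k` into pairwise distinct
odd parts (with value `1` at `k = 0`). -/
noncomputable def distinctOddPartitions (k : ℕ) : ℕ :=
  ((Finset.univ : Finset (Nat.Partition k)).filter
    fun p => p.parts.Nodup ∧ ∀ x ∈ p.parts, Odd x).card

open PowerSeries Finset

noncomputable section
abbrev PS := PowerSeries ℚ

def qf (Q : PS) (n : ℕ) : PS := ∏ i ∈ range n, (1 - Q ^ (i + 1))

variable {Q : PS}

lemma qf_cc (hQ : constantCoeff Q = 0) (n : ℕ) : constantCoeff (qf Q n) = 1 := by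
  rw [qf, map_prod]
  refine Finset.prod_eq_one fun i _ => ?_
  simp [hQ, zero_pow]

lemma qf_succ (n : ℕ) : qf Q (n + 1) = qf Q n * (1 - Q ^ (n + 1)) :=
  Finset.prod_range_succ _ _

lemma qf_zero : qf Q 0 = 1 := Finset.prod_range_zero _

lemma qf_mul_inv (hQ : constantCoeff Q = 0) (n : ℕ) : qf Q n * (qf Q n)⁻¹ = 1 :=
  PowerSeries.mul_inv_cancel _ (by rw [qf_cc hQ]; exact one_ne_zero)

lemma qf_isUnit (hQ : constantCoeff Q = 0) (n : ℕ) : IsUnit (qf Q n) :=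
  IsUnit.of_mul_eq_one _ (qf_mul_inv hQ n)

def qbin (Q : PS) (N k : ℕ) : PS :=
  if k ≤ N then qf Q N * (qf Q k)⁻¹ * (qf Q (N - k))⁻¹ else 0

lemma qbin_mul_qf (hQ : constantCoeff Q = 0) (N k : ℕ) (h : k ≤ N) :
    qbin Q N k * (qf Q k * qf Q (N - k)) = qf Q N := by
  rw [qbin, if_pos h]
  have h1 := qf_mul_inv hQ k
  have h2 := qf_mul_inv hQ (N - k)
  linear_combination (qf Q N * (qf Q (N-k))⁻¹ * qf Q (N-k)) * h1 + qf Q N * h2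

lemma qbin_of_gt (N k : ℕ) (h : N < k) : qbin Q N k = 0 := by
  rw [qbin, if_neg (by omega)]

lemma qbin_zero (hQ : constantCoeff Q = 0) (N : ℕ) : qbin Q N 0 = 1 := by
  rw [qbin, if_pos (Nat.zero_le _), qf_zero, Nat.sub_zero]
  have h2 := qf_mul_inv hQ N
  have : (1 : PS)⁻¹ = 1 := inv_one
  rw [this]
  linear_combination h2

lemma qbin_self (hQ : constantCoeff Q = 0) (N : ℕ) : qbin Q N N = 1 := by
  rw [qbin, if_pos le_rfl, Nat.sub_self, qf_zero]
  have h2 := qf_mul_inv hQ N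
  have : (1 : PS)⁻¹ = 1 := inv_one
  rw [this]
  linear_combination h2

lemma qbin_pascal (hQ : constantCoeff Q = 0) (N k : ℕ) (hk : 1 ≤ k) (hkN : k ≤ N + 1) :
    qbin Q (N + 1) k = qbin Q N k + Q ^ (N + 1 - k) * qbin Q N (k - 1) := by
  rcases eq_or_lt_of_le hkN with rfl | hlt
  · rw [qbin_self hQ, qbin_of_gt N (N+1) (lt_add_one N)]
    have h1 : N + 1 - (N + 1) = 0 := by omega
    have h2 : N + 1 - 1 = N := by omega
    rw [h1, h2, pow_zero, qbin_self hQ]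
    ring
  · have hkN' : k ≤ N := by omega
    -- cancel by the unit qf k * qf (N+1-k)
    have hu : IsUnit (qf Q k * qf Q (N + 1 - k)) :=
      (qf_isUnit hQ k).mul (qf_isUnit hQ (N + 1 - k))
    refine hu.mul_left_cancel ?_
    have e1 : qbin Q (N+1) k * (qf Q k * qf Q (N+1-k)) = qf Q (N+1) := by
      have h := qbin_mul_qf hQ (N+1) k (by omega)
      have hs : N + 1 - k = N+1-k := rfl
      linear_combination h
    have e2 : qbin Q N k * (qf Q k * qf Q (N-k)) = qf Q N := qbin_mul_qf hQ N k hkN'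
    have e3 : qbin Q N (k-1) * (qf Q (k-1) * qf Q (N-(k-1))) = qf Q N :=
      qbin_mul_qf hQ N (k-1) (by omega)
    have hk' : qf Q k = qf Q (k-1) * (1 - Q ^ k) := by
      have h := qf_succ (Q := Q) (k-1)
      have h' : k - 1 + 1 = k := by omega
      rwa [h'] at h
    have hNk : qf Q (N+1-k) = qf Q (N-k) * (1 - Q ^ (N+1-k)) := by
      have := qf_succ (Q := Q) (N-k)
      have h' : N - k + 1 = N + 1 - k := by omega
      rwa [h'] at this
    have hN1 : qf Q (N+1) = qf Q N * (1 - Q ^ (N+1)) := qf_succ N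
    have hNk' : N - (k-1) = N + 1 - k := by omega
    rw [hNk'] at e3
    have hQpow : Q ^ (N+1-k) * Q ^ k = Q ^ (N+1) := by
      rw [← pow_add]; congr 1; omega
    calc qf Q k * qf Q (N+1-k) * qbin Q (N+1) k = qf Q (N+1) := by
            rw [mul_comm]; exact e1
      _ = qf Q k * qf Q (N+1-k) * (qbin Q N k + Q ^ (N+1-k) * qbin Q N (k-1)) := by
            rw [hN1]
            have e2' : qbin Q N k * qf Q k * qf Q (N-k) = qf Q N := by
              rw [← e2]; ring
            have e3' : qbin Q N (k-1) * qf Q (k-1) * qf Q (N+1-k) = qf Q N := by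
              rw [← e3]; ring
            calc qf Q N * (1 - Q ^ (N+1))
                = qbin Q N k * qf Q k * qf Q (N-k) * (1 - Q^(N+1-k))
                  + Q^(N+1-k) * (qbin Q N (k-1) * qf Q (k-1) * (1 - Q^k) * qf Q (N+1-k)) := by
                  rw [e2']
                  have : qbin Q N (k-1) * qf Q (k-1) * (1 - Q^k) * qf Q (N+1-k)
                      = qf Q N * (1 - Q ^ k) := by rw [← e3']; ring
                  rw [this]
                  have : qf Q N * (1 - Q^(N+1-k)) + Q^(N+1-k) * (qf Q N * (1-Q^k))
                      = qf Q N * (1 - Q^(N+1-k) * Q^k) := by ring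
                  rw [this, hQpow]
              _ = qf Q k * qf Q (N+1-k) * (qbin Q N k + Q ^ (N+1-k) * qbin Q N (k-1)) := by
                  rw [hk', hNk]; ring
theorem gauss_binomial (hQ : constantCoeff Q = 0) (x y : PS) (N : ℕ) :
    ∏ i ∈ range N, (x + y * Q ^ i) =
      ∑ k ∈ range (N + 1), Q ^ (Nat.choose k 2) * qbin Q N k * y ^ k * x ^ (N - k) := by
  induction N with
  | zero => simp [qbin_zero hQ]
  | succ N ih =>
    rw [prod_range_succ, ih]
    have key : ∑ k ∈ range (N + 1 + 1),
        Q ^ (Nat.choose k 2) * qbin Q (N+1) k * y ^ k * x ^ (N + 1 - k)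
        = (∑ k ∈ range (N + 1), Q ^ (Nat.choose k 2) * qbin Q N k * y ^ k * x ^ (N + 1 - k))
          + ∑ k ∈ range (N + 1),
            Q ^ (Nat.choose k 2 + N) * qbin Q N k * y ^ (k + 1) * x ^ (N - k) := by
      rw [Finset.sum_range_succ' (fun k => Q ^ (Nat.choose k 2) * qbin Q (N+1) k * y ^ k
        * x ^ (N + 1 - k)) (N+1)]
      have hF0 : Q ^ (Nat.choose 0 2) * qbin Q (N+1) 0 * y ^ 0 * x ^ (N + 1 - 0)
          = x ^ (N+1) := by
        rw [qbin_zero hQ]; simp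
      rw [hF0]
      have hsplit : ∀ i ∈ range (N + 1),
          Q ^ (Nat.choose (i+1) 2) * qbin Q (N+1) (i+1) * y ^ (i+1) * x ^ (N + 1 - (i+1))
          = Q ^ (Nat.choose (i+1) 2) * qbin Q N (i+1) * y ^ (i+1) * x ^ (N - i)
            + Q ^ (Nat.choose i 2 + N) * qbin Q N i * y ^ (i + 1) * x ^ (N - i) := by
        intro i hi
        rw [Finset.mem_range] at hi
        rw [qbin_pascal hQ N (i+1) (by omega) (by omega)]
        have h1 : N + 1 - (i + 1) = N - i := by omega
        have h2 : i + 1 - 1 = i := by omega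
        have h3 : Nat.choose (i+1) 2 + (N + 1 - (i+1)) = Nat.choose i 2 + N := by
          have := Nat.choose_succ_succ (i) 1
          have h4 : Nat.choose i 1 = i := Nat.choose_one_right i
          have h5 : Nat.choose (i+1) 2 = i + Nat.choose i 2 := by
            rw [Nat.choose_succ_succ, h4]
          omega
        rw [h1, h2]
        have h3' : Nat.choose (i+1) 2 + (N - i) = Nat.choose i 2 + N := by omega
        have hp : Q ^ (Nat.choose (i+1) 2) * Q ^ (N - i) = Q ^ (Nat.choose i 2 + N) := by
          rw [← pow_add, h3']
        linear_combination (qbin Q N i * y ^ (i+1) * x ^ (N-i)) * hp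
      rw [Finset.sum_congr rfl hsplit, Finset.sum_add_distrib]
      have hlast : Q ^ (Nat.choose (N+1) 2) * qbin Q N (N+1) * y ^ (N+1) * x ^ (N - N)
          = 0 := by rw [qbin_of_gt N (N+1) (by omega)]; ring
      rw [Finset.sum_range_succ' (fun k => Q ^ (Nat.choose k 2) * qbin Q N k * y ^ k
        * x ^ (N + 1 - k)) N] at *
      -- goal juggling below
      have hG0 : Q ^ (Nat.choose 0 2) * qbin Q N 0 * y ^ 0 * x ^ (N + 1 - 0) = x ^ (N+1) := by
        rw [qbin_zero hQ]; simp
      have hGi : ∀ i ∈ range N,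
          Q ^ (Nat.choose (i+1) 2) * qbin Q N (i+1) * y ^ (i+1) * x ^ (N + 1 - (i+1))
          = Q ^ (Nat.choose (i+1) 2) * qbin Q N (i+1) * y ^ (i+1) * x ^ (N - i) := by
        intro i hi
        have : N + 1 - (i+1) = N - i := by omega
        rw [this]
      rw [hG0, Finset.sum_congr rfl hGi]
      have expand : ∑ i ∈ range (N+1),
          Q ^ (Nat.choose (i+1) 2) * qbin Q N (i+1) * y ^ (i+1) * x ^ (N - i)
          = ∑ i ∈ range N,
            Q ^ (Nat.choose (i+1) 2) * qbin Q N (i+1) * y ^ (i+1) * x ^ (N - i) := by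
        rw [Finset.sum_range_succ, hlast, add_zero]
      rw [expand]
      ring
    rw [key, mul_add]
    congr 1
    · rw [Finset.sum_mul]
      refine Finset.sum_congr rfl fun k hk => ?_
      rw [Finset.mem_range] at hk
      have : N + 1 - k = (N - k) + 1 := by omega
      rw [this, pow_succ]
      ring
    · rw [Finset.sum_mul]
      refine Finset.sum_congr rfl fun k hk => ?_
      rw [pow_add, pow_succ]
      ring
/-- generalized exponent: `c = 3` gives pentagonal numbers, `c = 2` gives squares. -/
def ge (c : ℕ) (j : ℤ) : ℕ := ((c * j ^ 2 - (c - 2 : ℕ) * j) / 2).toNat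

lemma cast_sub_two {c : ℕ} (hc : 2 ≤ c) : ((c - 2 : ℕ) : ℤ) = (c : ℤ) - 2 := by
  rw [Nat.cast_sub hc]; norm_num

lemma ge_nonneg_aux {c : ℕ} (hc : 2 ≤ c) (j : ℤ) :
    0 ≤ (c : ℤ) * j ^ 2 - ((c - 2 : ℕ) : ℤ) * j ∧
      (2 : ℤ) ∣ (c : ℤ) * j ^ 2 - ((c - 2 : ℕ) : ℤ) * j := by
  rw [cast_sub_two hc]
  have hc' : (2 : ℤ) ≤ c := by exact_mod_cast hc
  have hj1 : j ≤ j ^ 2 := by nlinarith [sq_nonneg (j - 1), sq_nonneg j]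
  have hj2 : -j ≤ j ^ 2 := by nlinarith [sq_nonneg (j + 1), sq_nonneg j]
  constructor
  · nlinarith
  · have h3 : (2:ℤ) ∣ j^2 - j := by
      have h := Int.even_mul_succ_self (j - 1)
      have h4 : (j-1) * (j-1+1) = j^2 - j := by ring
      rw [h4] at h
      exact h.two_dvd
    obtain ⟨t, ht⟩ := h3
    exact ⟨c * t + j, by linear_combination (c:ℤ) * ht⟩

lemma two_mul_ge {c : ℕ} (hc : 2 ≤ c) (j : ℤ) :
    2 * (ge c j : ℤ) = c * j ^ 2 - ((c - 2 : ℕ) : ℤ) * j := by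
  obtain ⟨hnn, t, ht⟩ := ge_nonneg_aux hc j
  rw [ge, ht, Int.mul_ediv_cancel_left _ (by norm_num), Int.toNat_of_nonneg (by omega)]
  try omega

lemma ge_ge_sq {c : ℕ} (hc : 2 ≤ c) (j : ℤ) : j ^ 2 ≤ (ge c j : ℤ) := by
  have h := two_mul_ge hc j
  rw [cast_sub_two hc] at h
  have hc' : (2 : ℤ) ≤ c := by exact_mod_cast hc
  have hj1 : j ≤ j ^ 2 := by nlinarith [sq_nonneg (j - 1), sq_nonneg j]
  have hj2 : -j ≤ j ^ 2 := by nlinarith [sq_nonneg (j + 1), sq_nonneg j]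
  nlinarith

lemma ge_zero (c : ℕ) : ge c 0 = 0 := by simp [ge]

lemma two_mul_choose_two (k : ℕ) : 2 * Nat.choose k 2 = k * (k - 1) := by
  rw [Nat.choose_two_right]
  have h : Even (k * (k - 1)) := by
    rcases k with _ | j
    · simp
    · have := Nat.even_mul_succ_self j
      simpa [Nat.mul_comm] using this
  obtain ⟨m, hm⟩ := h
  rw [hm]
  omega

/-- The finite triple-product style identity. -/
theorem finite_triple (c n : ℕ) (hc : 2 ≤ c) :
    ∏ i ∈ range n, ((1 - (X : PS) ^ (c * i + 1)) * (1 - X ^ (c * i + (c - 1)))) =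
      ∑ k ∈ range (2 * n + 1),
        (-1 : PS) ^ (n + k) * X ^ (ge c ((k : ℤ) - n)) * qbin (X ^ c) (2 * n) k := by
  have hc0 : c ≠ 0 := by omega
  have hQ : constantCoeff ((X : PS) ^ c) = 0 := by
    rw [map_pow, constantCoeff_X, zero_pow hc0]
  rcases Nat.eq_zero_or_pos n with rfl | hn
  · simp [ge_zero, qbin_self hQ]
  have key := gauss_binomial hQ ((X : PS) ^ (c * n - 1)) (-1) (2 * n)
  have hcn1 : 1 ≤ c * n := Nat.mul_pos (by omega) hn
  set E : ℕ := c * Nat.choose n 2 + n * (c * n - 1) with hE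
  have lhs_eq : ∏ i ∈ range (2 * n), ((X : PS) ^ (c * n - 1) + (-1) * (X ^ c) ^ i) =
      (-1) ^ n * X ^ E *
        ∏ i ∈ range n, ((1 - (X : PS) ^ (c * i + 1)) * (1 - X ^ (c * i + (c - 1)))) := by
    have hsplit : ∏ i ∈ range (2 * n), ((X : PS) ^ (c * n - 1) + (-1) * (X ^ c) ^ i) =
        (∏ i ∈ range n, ((X : PS) ^ (c * n - 1) + (-1) * (X ^ c) ^ i)) *
          ∏ i ∈ range n, ((X : PS) ^ (c * n - 1) + (-1) * (X ^ c) ^ (n + i)) := by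
      rw [two_mul, Finset.prod_range_add]
    have h1 : ∀ i ∈ range n, ((X : PS) ^ (c * n - 1) + (-1) * (X ^ c) ^ i) =
        (-1) * (X ^ (c * i) * (1 - X ^ (c * (n - 1 - i) + (c - 1)))) := by
      intro i hi
      rw [Finset.mem_range] at hi
      have h2 : c * (n - 1 - i) + (c - 1) + c * i = c * n - 1 := by
        have h3 : n - 1 - i + i = n - 1 := by omega
        have h4 : c * (n-1-i) + c * i = c * (n - 1) := by rw [← Nat.mul_add, h3]
        have h5 : c * (n - 1) + (c-1) = c * n - 1 := by
          rcases n with _ | m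
          · omega
          · have hm : m + 1 - 1 = m := rfl
            rw [hm, Nat.mul_succ]
            omega
        omega
      rw [← pow_mul, ← h2, pow_add]
      ring
    have h2 : ∀ i ∈ range n, ((X : PS) ^ (c * n - 1) + (-1) * (X ^ c) ^ (n + i)) =
        X ^ (c * n - 1) * (1 - X ^ (c * i + 1)) := by
      intro i _
      have h3 : c * n - 1 + (c * i + 1) = c * (n + i) := by
        rw [Nat.mul_add]; omega
      rw [← pow_mul, ← h3, pow_add]
      ring
    have hXpows : ∏ i ∈ range n, (X : PS) ^ (c * i) = X ^ (c * Nat.choose n 2) := by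
      rw [Finset.prod_pow_eq_pow_sum, ← Finset.mul_sum, Finset.sum_range_id,
        ← Nat.choose_two_right]
    have hrefl : ∏ i ∈ range n, (1 - (X:PS) ^ (c * (n - 1 - i) + (c - 1))) =
        ∏ i ∈ range n, (1 - (X:PS) ^ (c * i + (c - 1))) :=
      Finset.prod_range_reflect (fun i => 1 - (X:PS) ^ (c * i + (c-1))) n
    have hXE : (X:PS) ^ (c * Nat.choose n 2) * X ^ ((c*n-1)*n) = X ^ E := by
      rw [← pow_add]
      congr 1
      rw [hE]
      ring
    calc ∏ i ∈ range (2 * n), ((X : PS) ^ (c * n - 1) + (-1) * (X ^ c) ^ i)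
        = (∏ i ∈ range n, ((-1) * ((X:PS) ^ (c * i) * (1 - X ^ (c * (n - 1 - i) + (c - 1)))))) *
          ∏ i ∈ range n, ((X:PS) ^ (c * n - 1) * (1 - X ^ (c * i + 1))) := by
          rw [hsplit, Finset.prod_congr rfl h1, Finset.prod_congr rfl h2]
      _ = ((-1)^n * ((X:PS) ^ (c * Nat.choose n 2) *
              ∏ i ∈ range n, (1 - X ^ (c * i + (c - 1))))) *
          (((X:PS) ^ (c*n-1)) ^ n * ∏ i ∈ range n, (1 - X ^ (c * i + 1))) := by
          rw [Finset.prod_mul_distrib, Finset.prod_mul_distrib, Finset.prod_mul_distrib,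
            Finset.prod_const, Finset.prod_const, Finset.card_range, hXpows, hrefl]
      _ = (-1) ^ n * X ^ E *
            ∏ i ∈ range n, ((1 - (X : PS) ^ (c * i + 1)) * (1 - X ^ (c * i + (c - 1)))) := by
          rw [Finset.prod_mul_distrib, ← pow_mul]
          linear_combination ((-1:PS)^n * (∏ i ∈ range n, (1 - (X:PS) ^ (c*i+1))) *
            ∏ i ∈ range n, (1 - (X:PS) ^ (c*i+(c-1)))) * hXE
  have rhs_eq : ∑ k ∈ range (2 * n + 1),
      ((X:PS) ^ c) ^ (Nat.choose k 2) * qbin (X ^ c) (2*n) k * (-1) ^ k *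
        ((X:PS) ^ (c * n - 1)) ^ (2 * n - k) =
      (-1) ^ n * X ^ E * ∑ k ∈ range (2 * n + 1),
        (-1 : PS) ^ (n + k) * X ^ (ge c ((k : ℤ) - n)) * qbin (X ^ c) (2 * n) k := by
    rw [Finset.mul_sum]
    refine Finset.sum_congr rfl fun k hk => ?_
    rw [Finset.mem_range] at hk
    have hexp : c * Nat.choose k 2 + (c * n - 1) * (2 * n - k) = E + ge c ((k : ℤ) - n) := by
      have hCk := two_mul_choose_two k
      have hCn := two_mul_choose_two n
      have hg := two_mul_ge hc ((k : ℤ) - n)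
      rw [cast_sub_two hc] at hg
      have hcast : ((c * n - 1 : ℕ) : ℤ) = (c : ℤ) * n - 1 := by
        rw [Nat.cast_sub hcn1]; push_cast; ring
      have hcast2 : ((2 * n - k : ℕ) : ℤ) = 2 * (n : ℤ) - k := by
        rw [Nat.cast_sub (by omega)]; push_cast; ring
      have hCkZ : 2 * ((Nat.choose k 2 : ℤ)) = (k : ℤ) ^ 2 - k := by
        rcases Nat.eq_zero_or_pos k with rfl | hk0
        · simp
        · have h : ((2 * Nat.choose k 2 : ℕ) : ℤ) = ((k * (k-1) : ℕ) : ℤ) := by rw [hCk]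
          push_cast [Nat.cast_sub hk0] at h
          linear_combination h
      have hCnZ : 2 * ((Nat.choose n 2 : ℤ)) = (n : ℤ) ^ 2 - n := by
        have h : ((2 * Nat.choose n 2 : ℕ) : ℤ) = ((n * (n-1) : ℕ) : ℤ) := by rw [hCn]
        push_cast [Nat.cast_sub hn] at h
        linear_combination h
      have goalZ : 2 * ((c * Nat.choose k 2 + (c * n - 1) * (2 * n - k) : ℕ) : ℤ)
          = 2 * (((E : ℤ)) + ((ge c ((k : ℤ) - n) : ℤ))) := by
        push_cast
        rw [hcast, hcast2, hE]
        push_cast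
        rw [hcast]
        linear_combination (c : ℤ) * hCkZ - (c:ℤ) * hCnZ - hg
      have goalZ' : ((c * Nat.choose k 2 + (c * n - 1) * (2 * n - k) : ℕ) : ℤ)
          = ((E + ge c ((k : ℤ) - n) : ℕ) : ℤ) := by
        push_cast at goalZ ⊢
        linarith
      exact_mod_cast goalZ'
    have hsign : ((-1 : PS)) ^ k = (-1) ^ n * (-1) ^ (n + k) := by
      rw [← pow_add]
      have : n + (n + k) = 2 * n + k := by ring
      rw [this, pow_add, pow_mul]
      norm_num
    rw [← pow_mul, ← pow_mul, hsign]
    calc (X:PS) ^ (c * Nat.choose k 2) * qbin (X ^ c) (2*n) k * ((-1:PS) ^ n * (-1) ^ (n+k)) *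
          X ^ ((c * n - 1) * (2 * n - k))
        = (-1:PS) ^ n * (-1) ^ (n+k) *
            (X ^ (c * Nat.choose k 2) * X ^ ((c * n - 1) * (2 * n - k))) *
            qbin (X ^ c) (2*n) k := by ring
      _ = (-1:PS) ^ n * (-1) ^ (n+k) * X ^ (E + ge c ((k : ℤ) - n)) * qbin (X ^ c) (2*n) k := by
          rw [← pow_add (X : PS) (c * Nat.choose k 2) ((c * n - 1) * (2 * n - k)), hexp]
      _ = (-1:PS) ^ n * X ^ E * ((-1) ^ (n + k) * X ^ (ge c ((k : ℤ) - n)) * qbin (X ^ c) (2*n) k) := by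
          rw [pow_add]; ring
  rw [lhs_eq, rhs_eq] at key
  have hne : ((-1 : PS) ^ n * X ^ E) ≠ 0 := by
    apply mul_ne_zero
    · exact pow_ne_zero _ (by norm_num)
    · exact pow_ne_zero _ X_ne_zero
  exact mul_left_cancel₀ hne key
lemma qf_ratio {Q : PS} (hQ : constantCoeff Q = 0) {m₁ m₂ : ℕ} (h : m₁ ≤ m₂) :
    qf Q m₂ * (qf Q m₁)⁻¹ = ∏ i ∈ Finset.Ico m₁ m₂, (1 - Q ^ (i + 1)) := by
  have hsplit : qf Q m₂ = qf Q m₁ * ∏ i ∈ Finset.Ico m₁ m₂, (1 - Q ^ (i + 1)) := by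
    rw [qf, qf, Finset.range_eq_Ico, Finset.range_eq_Ico, Finset.prod_Ico_consecutive _ (Nat.zero_le m₁) h]
  rw [hsplit]
  have hinv := qf_mul_inv hQ m₁
  linear_combination (∏ i ∈ Finset.Ico m₁ m₂, (1 - Q ^ (i + 1))) * hinv

lemma qf_mul_qbin {Q : PS} (hQ : constantCoeff Q = 0) (n k : ℕ) (hk : k ≤ 2 * n) :
    qf Q n * qbin Q (2 * n) k =
      (∏ i ∈ Finset.Ico (n - ((k : ℤ) - n).natAbs) n, (1 - Q ^ (i + 1))) *
        ∏ i ∈ Finset.Ico (n + ((k : ℤ) - n).natAbs) (2 * n), (1 - Q ^ (i + 1)) := by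
  set d := ((k : ℤ) - n).natAbs with hd
  have hdn : d ≤ n := by
    rw [hd]
    omega
  have key : qbin Q (2 * n) k = qf Q (2*n) * (qf Q (n + d))⁻¹ * (qf Q (n - d))⁻¹ := by
    rw [qbin, if_pos hk]
    rcases le_or_gt n k with hnk | hnk
    · have h1 : k = n + d := by rw [hd]; omega
      have h2 : 2 * n - k = n - d := by rw [hd]; omega
      rw [h2, h1]
    · have h1 : k = n - d := by rw [hd]; omega
      have h2 : 2 * n - k = n + d := by rw [hd]; omega
      rw [h2, h1]
      ring
  rw [key]
  have r1 : qf Q (2*n) * (qf Q (n + d))⁻¹ = ∏ i ∈ Finset.Ico (n+d) (2*n), (1 - Q ^ (i+1)) :=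
    qf_ratio hQ (by omega)
  have r2 : qf Q n * (qf Q (n - d))⁻¹ = ∏ i ∈ Finset.Ico (n-d) n, (1 - Q ^ (i+1)) :=
    qf_ratio hQ (by omega)
  calc qf Q n * (qf Q (2*n) * (qf Q (n+d))⁻¹ * (qf Q (n-d))⁻¹)
      = (qf Q n * (qf Q (n-d))⁻¹) * (qf Q (2*n) * (qf Q (n+d))⁻¹) := by ring
    _ = _ := by rw [r1, r2]

lemma coeff_X_pow_mul_one_sub_prod (N e : ℕ) (s : Finset ℕ) (f : ℕ → ℕ)
    (h : ∀ i ∈ s, N < e + f i) :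
    (coeff N) ((X : PS) ^ e * ∏ i ∈ s, (1 - X ^ (f i))) =
      if e = N then 1 else 0 := by
  rw [coeff_X_pow_mul']
  rcases le_or_gt e N with he | he
  · rw [if_pos he]
    have key : (coeff (N - e)) ((1 : PS) * ∏ i ∈ s, (1 - X ^ (f i))) = coeff (N-e) 1 := by
      apply coeff_mul_prod_one_sub_of_lt_order
      intro i hi
      rw [order_X_pow]
      have := h i hi
      exact_mod_cast (by omega : N - e < f i)
    rw [one_mul] at key
    rw [key, coeff_one]
    by_cases heN : e = N
    · simp [heN]
    · rw [if_neg (by omega), if_neg heN]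
  · rw [if_neg (by omega), if_neg (by omega)]

theorem coeff_triple (c n N : ℕ) (hc : 2 ≤ c) (hn : N + c * c < c * (n + 1)) :
    (coeff N) (∏ i ∈ range n,
        ((1 - (X : PS) ^ (c * i + 1)) * (1 - X ^ (c * i + (c - 1))) * (1 - X ^ (c * (i + 1))))) =
      ∑ k ∈ range (2 * n + 1), (-1 : ℚ) ^ (n + k) * (if ge c ((k : ℤ) - n) = N then 1 else 0) := by
  have hc0 : c ≠ 0 := by omega
  have hQ : constantCoeff ((X : PS) ^ c) = 0 := by
    rw [map_pow, constantCoeff_X, zero_pow hc0]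
  have hsplit : ∏ i ∈ range n,
      ((1 - (X : PS) ^ (c * i + 1)) * (1 - X ^ (c * i + (c - 1))) * (1 - X ^ (c * (i + 1)))) =
      (∏ i ∈ range n, ((1 - (X : PS) ^ (c * i + 1)) * (1 - X ^ (c * i + (c - 1))))) *
        qf ((X : PS) ^ c) n := by
    rw [qf, ← Finset.prod_mul_distrib]
    refine Finset.prod_congr rfl fun i _ => ?_
    rw [← pow_mul]
  rw [hsplit, finite_triple c n hc, Finset.sum_mul, map_sum]
  refine Finset.sum_congr rfl fun k hk => ?_
  rw [Finset.mem_range] at hk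
  set d := ((k : ℤ) - n).natAbs with hd
  have hterm : (-1 : PS) ^ (n + k) * X ^ (ge c ((k:ℤ) - n)) * qbin ((X:PS) ^ c) (2 * n) k *
      qf ((X:PS) ^ c) n =
      C ((-1 : ℚ) ^ (n + k)) *
        ((X : PS) ^ (ge c ((k:ℤ) - n)) *
          ∏ i ∈ (Finset.Ico (n - d) n ∪ Finset.Ico (n + d) (2 * n)), (1 - X ^ (c * (i + 1)))) := by
    have hqq := qf_mul_qbin hQ n k (by omega)
    have hdisj : Disjoint (Finset.Ico (n - d) n) (Finset.Ico (n + d) (2 * n)) := by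
      apply Finset.disjoint_left.mpr
      intro a ha hb
      rw [Finset.mem_Ico] at ha hb
      omega
    rw [Finset.prod_union hdisj]
    have hC : (C) ((-1 : ℚ) ^ (n + k)) = (-1 : PS) ^ (n + k) := by
      rw [map_pow, map_neg, map_one]
    rw [hC]
    have hpow : ∀ (s : Finset ℕ), ∏ i ∈ s, (1 - (X:PS) ^ (c * (i+1))) =
        ∏ i ∈ s, (1 - ((X:PS) ^ c) ^ (i + 1)) := by
      intro s; refine Finset.prod_congr rfl fun i _ => ?_; rw [← pow_mul]
    rw [hpow, hpow, ← hqq]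
    ring
  rw [hterm, coeff_C_mul]
  congr 1
  rw [Finset.prod_union (by
    apply Finset.disjoint_left.mpr
    intro a ha hb
    rw [Finset.mem_Ico] at ha hb
    omega), ← Finset.prod_union (by
    apply Finset.disjoint_left.mpr
    intro a ha hb
    rw [Finset.mem_Ico] at ha hb
    omega)]
  apply coeff_X_pow_mul_one_sub_prod
  intro i hi
  -- arithmetic: N < ge + c*(i+1)
  have hge : d * d ≤ ge c ((k:ℤ) - n) := by
    have h1 := ge_ge_sq hc ((k:ℤ) - n)
    have h2 : ((k:ℤ) - n) ^ 2 = (d : ℤ) * d := by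
      rw [hd]
      rw [← Int.natAbs_pow_two ((k:ℤ) - n)]
      push_cast
      ring
    rw [h2] at h1
    exact_mod_cast h1
  have hilow : n - d ≤ i := by
    rw [Finset.mem_union, Finset.mem_Ico, Finset.mem_Ico] at hi
    omega
  have hdn : d ≤ n := by rw [hd]; omega
  -- reduce to: c*d ≤ ge + c*c  (since N + c*c < c*(n+1) ≤ ge + c*(i+1) + c*c - c*d + ...)
  have hcd : c * d ≤ ge c ((k:ℤ) - n) + c * c := by
    rcases le_or_gt d c with h | h
    · have : c * d ≤ c * c := Nat.mul_le_mul_left c h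
      omega
    · have : c * d ≤ d * d := Nat.mul_le_mul_right d (le_of_lt h)
      omega
  have hmono : c * (n - d + 1) ≤ c * (i + 1) := by
    apply Nat.mul_le_mul_left
    omega
  have hexp : c * (n + 1) = c * (n - d + 1) + c * d := by
    have h1 : n - d + 1 + d = n + 1 := by omega
    rw [← h1, Nat.mul_add]
  omega
lemma prod_c3 (n : ℕ) :
    ∏ i ∈ range n,
        ((1 - (X : PS) ^ (3 * i + 1)) * (1 - X ^ (3 * i + (3 - 1))) * (1 - X ^ (3 * (i + 1)))) =
      ∏ t ∈ range (3 * n), (1 - (X : PS) ^ (t + 1)) := by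
  induction n with
  | zero => simp
  | succ n ih =>
    rw [Finset.prod_range_succ, ih]
    have h3 : 3 * (n + 1) = (3 * n + 1) + 1 + 1 := by omega
    rw [h3, Finset.prod_range_succ, Finset.prod_range_succ, Finset.prod_range_succ]
    have e1 : 3 * n + 1 + 1 = 3 * n + (3-1) := by omega
    have e2 : 3 * n + 1 + 1 + 1 = 3 * (n+1) := by omega
    rw [e1, e2]
    ring
lemma prod_c2 (n : ℕ) :
    ∏ i ∈ range n,
        ((1 - (X : PS) ^ (2 * i + 1)) * (1 - X ^ (2 * i + (2 - 1))) * (1 - X ^ (2 * (i + 1)))) =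
      (∏ i ∈ range n, (1 - (X : PS) ^ (2 * i + 1))) *
        ∏ t ∈ range (2 * n), (1 - (X : PS) ^ (t + 1)) := by
  induction n with
  | zero => simp
  | succ n ih =>
    rw [Finset.prod_range_succ, ih, Finset.prod_range_succ]
    have h2 : 2 * (n + 1) = (2 * n + 1) + 1 := by omega
    rw [h2, Finset.prod_range_succ, Finset.prod_range_succ]
    have e1 : 2 * n + 1 + 1 = 2 * (n+1) := by omega
    have e2 : 2 * n + (2 - 1) = 2 * n + 1 := by omega
    rw [e1, e2]
    ring
/-! Ported partition GF machinery (adapted from Archive.Wiedijk100Theorems.Partition). -/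

def indicatorSeries (α : Type*) [Semiring α] (s : Set ℕ) : PowerSeries α :=
  PowerSeries.mk fun n => if n ∈ s then 1 else 0

theorem coeff_indicator {α : Type*} (s : Set ℕ) [Semiring α] (n : ℕ) :
    coeff n (indicatorSeries α s) = if n ∈ s then 1 else 0 :=
  coeff_mk _ _

theorem two_series' (i : ℕ) {α : Type*} [Semiring α] :
    1 + (X : PowerSeries α) ^ (i + 1) = indicatorSeries α {0, i + 1} := by
  ext n
  simp only [coeff_indicator, coeff_one, coeff_X_pow, Set.mem_insert_iff, Set.mem_singleton_iff,
    map_add]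
  cases' n with d
  · simp [(Nat.succ_ne_zero i).symm]
  · simp [Nat.succ_ne_zero d]

def mkOdd : ℕ ↪ ℕ := ⟨fun i => 2 * i + 1, fun x y h => by
  change 2 * x + 1 = 2 * y + 1 at h; omega⟩

open Finset.HasAntidiagonal

theorem partialGF_prop (α : Type*) [CommSemiring α] (n : ℕ) (s : Finset ℕ)
    (hs : ∀ i ∈ s, 0 < i) (c : ℕ → Set ℕ) (hc : ∀ i, i ∉ s → 0 ∈ c i) :
    #{p : n.Partition | (∀ j, p.parts.count j ∈ c j) ∧ ∀ j ∈ p.parts, j ∈ s} =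
      coeff n (∏ i ∈ s, indicatorSeries α ((· * i) '' c i)) := by
  simp_rw [coeff_prod, coeff_indicator, prod_boole, sum_boole]
  apply congr_arg
  simp only [mem_univ, forall_true_left, not_and, not_forall, exists_prop,
    Set.mem_image, not_exists]
  set φ : (a : Nat.Partition n) →
    a ∈ filter (fun p ↦ (∀ (j : ℕ), Multiset.count j p.parts ∈ c j) ∧ ∀ j ∈ p.parts, j ∈ s) univ →
    ℕ →₀ ℕ := fun p _ => {
      toFun := fun i => Multiset.count i p.parts • i
      support := Finset.filter (fun i => i ≠ 0) p.parts.toFinset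
      mem_support_toFun := fun a => by
        simp only [smul_eq_mul, ne_eq, mul_eq_zero, Multiset.count_eq_zero]
        rw [not_or, not_not]
        simp only [Multiset.mem_toFinset, not_not, mem_filter] }
  refine Finset.card_bij φ ?_ ?_ ?_
  · intro a ha
    simp only [φ, not_forall, not_exists, not_and, exists_prop, mem_filter]
    rw [mem_finsuppAntidiag]
    dsimp only [ne_eq, smul_eq_mul, id_eq, eq_mpr_eq_cast, le_eq_subset, Finsupp.coe_mk]
    simp only [mem_univ, forall_true_left, not_and, not_forall, exists_prop,
      mem_filter, true_and] at ha
    refine ⟨⟨?_, fun i ↦ ?_⟩, fun i _ ↦ ⟨a.parts.count i, ha.1 i, rfl⟩⟩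
    · conv_rhs => simp [← a.parts_sum]
      rw [sum_multiset_count_of_subset _ s]
      · simp only [smul_eq_mul]
      · intro i
        simp only [Multiset.mem_toFinset, not_not, mem_filter]
        apply ha.2
    · simp only [ne_eq, Multiset.mem_toFinset, not_not, mem_filter, and_imp]
      exact fun hi _ ↦ ha.2 i hi
  · intro p₁ hp₁ p₂ hp₂ h
    apply Nat.Partition.ext
    simp only [true_and, mem_univ, mem_filter] at hp₁ hp₂
    ext i
    simp only [φ, ne_eq, Multiset.mem_toFinset, not_not, smul_eq_mul, Finsupp.mk.injEq] at h
    by_cases hi : i = 0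
    · rw [hi]
      rw [Multiset.count_eq_zero_of_notMem]
      · rw [Multiset.count_eq_zero_of_notMem]
        intro a; exact Nat.lt_irrefl 0 (hs 0 (hp₂.2 0 a))
      intro a; exact Nat.lt_irrefl 0 (hs 0 (hp₁.2 0 a))
    · rw [← mul_left_inj' hi]
      rw [funext_iff] at h
      exact h.2 i
  · simp only [φ, mem_filter, mem_finsuppAntidiag, mem_univ, exists_prop, true_and, and_assoc]
    rintro f ⟨hf, hf₃, hf₄⟩
    have hf' : f ∈ finsuppAntidiag s n := mem_finsuppAntidiag.mpr ⟨hf, hf₃⟩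
    simp only [mem_finsuppAntidiag] at hf'
    refine ⟨⟨∑ i ∈ s, Multiset.replicate (f i / i) i, ?_, ?_⟩, ?_, ?_, ?_⟩
    · intro i hi
      simp only [exists_prop, Multiset.mem_sum, mem_map, Function.Embedding.coeFn_mk] at hi
      rcases hi with ⟨t, ht, z⟩
      apply hs
      rwa [Multiset.eq_of_mem_replicate z]
    · simp_rw [Multiset.sum_sum, Multiset.sum_replicate, Nat.nsmul_eq_mul]
      rw [← hf'.1]
      refine sum_congr rfl fun i hi => Nat.div_mul_cancel ?_
      rcases hf₄ i hi with ⟨w, _, hw₂⟩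
      rw [← hw₂]
      exact dvd_mul_left _ _
    · intro i
      simp_rw [Multiset.count_sum', Multiset.count_replicate, sum_ite_eq']
      split_ifs with h
      · rcases hf₄ i h with ⟨w, hw₁, hw₂⟩
        rwa [← hw₂, Nat.mul_div_cancel _ (hs i h)]
      · exact hc _ h
    · intro i hi
      rw [Multiset.mem_sum] at hi
      rcases hi with ⟨j, hj₁, hj₂⟩
      rwa [Multiset.eq_of_mem_replicate hj₂]
    · ext i
      simp_rw [Multiset.count_sum', Multiset.count_replicate, sum_ite_eq']
      simp only [ne_eq, Multiset.mem_toFinset, not_not, smul_eq_mul, ite_mul,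
        zero_mul, Finsupp.coe_mk]
      split_ifs with h
      · apply Nat.div_mul_cancel
        rcases hf₄ i h with ⟨w, _, hw₂⟩
        apply Dvd.intro_left _ hw₂
      · apply symm
        rw [← Finsupp.notMem_support_iff]
        exact notMem_mono hf'.2 h

theorem coeff_distinctOdd (n m : ℕ) (h : n < 2 * m) :
    coeff n (∏ i ∈ range m, (1 + (X : PS) ^ (2 * i + 1))) =
      (distinctOddPartitions n : ℚ) := by
  rw [distinctOddPartitions]
  have base := partialGF_prop ℚ n ((range m).map mkOdd)
    (by rintro i hi; rw [mem_map] at hi; rcases hi with ⟨a, -, rfl⟩; exact Nat.succ_pos _)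
    (fun _ => {0, 1}) (fun _ _ => Or.inl rfl)
  have hcount : ∀ p : n.Partition,
      ((∀ j, p.parts.count j ∈ ({0, 1} : Set ℕ)) ∧ ∀ j ∈ p.parts, j ∈ (range m).map mkOdd) ↔
        (p.parts.Nodup ∧ ∀ x ∈ p.parts, Odd x) := by
    intro p
    constructor
    · rintro ⟨h1, h2⟩
      constructor
      · rw [Multiset.nodup_iff_count_le_one]
        intro j
        have hj := h1 j
        simp only [Set.mem_insert_iff, Set.mem_singleton_iff] at hj
        omega
      · intro x hx
        rcases mem_map.mp (h2 x hx) with ⟨a, -, rfl⟩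
        have ha : (mkOdd a : ℕ) = 2 * a + 1 := rfl
        rw [ha]
        exact (even_two_mul a).add_one
    · rintro ⟨h1, h2⟩
      constructor
      · intro j
        have hj := Multiset.nodup_iff_count_le_one.mp h1 j
        simp only [Set.mem_insert_iff, Set.mem_singleton_iff]
        omega
      · intro j hj
        have hjn : j ≤ n := by
          simpa [p.parts_sum] using Multiset.single_le_sum (fun _ _ => Nat.zero_le _) _ hj
        rcases h2 j hj with ⟨a, ha⟩
        rw [mem_map]
        refine ⟨a, mem_range.mpr (by omega), ?_⟩
        have h3 : (mkOdd a : ℕ) = 2 * a + 1 := rfl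
        rw [h3]
        omega
  have hcard : #{p : n.Partition |
      (∀ j, p.parts.count j ∈ ({0, 1} : Set ℕ)) ∧ ∀ j ∈ p.parts, j ∈ (range m).map mkOdd} =
      #{p : n.Partition | p.parts.Nodup ∧ ∀ x ∈ p.parts, Odd x} := by
    apply Finset.card_bij (fun p _ => p)
    · intro p hp
      rw [mem_filter] at hp ⊢
      exact ⟨mem_univ _, (hcount p).mp hp.2⟩
    · intro p _ q _ hpq; exact hpq
    · intro p hp
      rw [mem_filter] at hp
      exact ⟨p, mem_filter.mpr ⟨mem_univ _, (hcount p).mpr hp.2⟩, rfl⟩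
  rw [hcard] at base
  have hprod : (∏ i ∈ (range m).map mkOdd, indicatorSeries ℚ ((· * i) '' {0, 1}))
      = ∏ i ∈ range m, (1 + (X : PS) ^ (2 * i + 1)) := by
    rw [Finset.prod_map]
    refine Finset.prod_congr rfl fun i _ => ?_
    have h1 : (mkOdd i : ℕ) = 2 * i + 1 := rfl
    have himg : ((· * (mkOdd i : ℕ)) '' {0, 1} : Set ℕ) = {0, 2 * i + 1} := by
      rw [Set.image_pair]
      simp [h1]
    rw [himg]
    exact (two_series' (2 * i)).symm
  rw [hprod] at base
  exact base.symm
lemma neg1pow (a b : ℕ) (h : a % 2 = b % 2) : (-1 : ℚ) ^ a = (-1) ^ b := by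
  rw [← Nat.div_add_mod a 2, ← Nat.div_add_mod b 2, pow_add, pow_add, pow_mul, pow_mul]
  norm_num [h]

lemma coeff_Dodd (n m : ℕ) (h : n < 2 * m) :
    coeff n (∏ i ∈ range m, (1 - (X : PS) ^ (2 * i + 1))) =
      (-1) ^ n * (distinctOddPartitions n : ℚ) := by
  have hres : (∏ i ∈ range m, (1 - (X : PS) ^ (2 * i + 1)))
      = rescale (-1 : ℚ) (∏ i ∈ range m, (1 + X ^ (2 * i + 1))) := by
    rw [map_prod]
    refine Finset.prod_congr rfl fun i _ => ?_
    rw [map_add, map_one, map_pow, rescale_X, mul_pow, ← map_pow]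
    have hodd : ((-1 : ℚ)) ^ (2 * i + 1) = -1 := Odd.neg_one_pow ⟨i, rfl⟩
    rw [hodd, map_neg, map_one]
    ring
  rw [hres, coeff_rescale, coeff_distinctOdd n m h]

lemma two_mul_ge3 (j : ℤ) : 2 * (ge 3 j : ℤ) = 3 * j ^ 2 - j := by
  have h := two_mul_ge (by norm_num : 2 ≤ 3) j
  norm_num at h
  exact h

lemma ge_three_inj {j j' : ℤ} (h : ge 3 j = ge 3 j') : j = j' := by
  have h1 := two_mul_ge3 j
  have h2 := two_mul_ge3 j'
  rw [h] at h1
  have h3 : (j' - j) * (3 * (j' + j) - 1) = 0 := by linear_combination h1 - h2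
  rcases mul_eq_zero.mp h3 with h4 | h4
  · omega
  · omega

lemma ge_two_eq (j : ℤ) : (ge 2 j : ℤ) = j ^ 2 := by
  have h := two_mul_ge (le_refl 2) j
  norm_num at h
  omega

lemma penta_eval (N n : ℕ) (hNn : N ≤ n) :
    ∑ k ∈ range (2 * n + 1), (-1 : ℚ) ^ (n + k) * (if ge 3 ((k : ℤ) - n) = N then 1 else 0)
      = ((pentaCoeff (N : ℤ) : ℤ) : ℚ) := by
  by_cases hN0 : N = 0
  · subst hN0
    rw [show pentaCoeff ((0 : ℕ) : ℤ) = 1 by rw [pentaCoeff]; norm_num]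
    rw [Finset.sum_eq_single_of_mem n (by rw [mem_range]; omega)]
    · rw [show ((n : ℤ) - n) = 0 by ring, ge_zero, if_pos rfl, mul_one]
      exact Even.neg_one_pow ⟨n, rfl⟩
    · intro k _ hkn
      rw [if_neg, mul_zero]
      intro hge
      have h1 := ge_ge_sq (by norm_num : 2 ≤ 3) ((k : ℤ) - n)
      rw [hge] at h1
      norm_num at h1
      have : (k : ℤ) = n := by nlinarith [sq_nonneg ((k:ℤ) - n)]
      exact hkn (by exact_mod_cast this)
  · rw [pentaCoeff, if_neg (show ((N : ℕ) : ℤ) ≠ 0 by exact_mod_cast hN0)]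
    by_cases hex : ∃ k : ℕ, 0 < k ∧
        (2 * ((N : ℕ) : ℤ) = 3 * (k : ℤ) ^ 2 + k ∨ 2 * ((N : ℕ) : ℤ) = 3 * (k : ℤ) ^ 2 - k)
    · rw [dif_pos hex]
      obtain ⟨hk0pos, hk0rep⟩ := hex.choose_spec
      set k0 : ℕ := hex.choose with hk0
      set j₀ : ℤ := if 2 * ((N : ℕ) : ℤ) = 3 * (k0 : ℤ) ^ 2 - k0 then (k0 : ℤ) else -(k0 : ℤ)
        with hj₀
      have habs : j₀ = k0 ∨ j₀ = -(k0 : ℤ) := by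
        rw [hj₀]; split_ifs <;> simp
      have hgej : ge 3 j₀ = N := by
        have h1 := two_mul_ge3 j₀
        have h2 : 2 * (ge 3 j₀ : ℤ) = 2 * N := by
          rw [h1, hj₀]
          split_ifs with hb
          · rw [hb]
          · rcases hk0rep with hr | hr
            · rw [hr]; ring
            · exact absurd hr hb
        have := mul_left_cancel₀ (two_ne_zero) h2
        exact_mod_cast this
      have hk0N : k0 ≤ N := by
        have hsq : (k0 : ℤ) ^ 2 ≤ (ge 3 j₀ : ℤ) := by
          have hgs := ge_ge_sq (by norm_num : 2 ≤ 3) j₀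
          have h2 : j₀ ^ 2 = (k0 : ℤ) ^ 2 := by
            rcases habs with h | h <;> rw [h] <;> ring
          rw [h2] at hgs
          exact hgs
        rw [hgej] at hsq
        have hk2 : (k0 : ℤ) ≤ (k0 : ℤ) ^ 2 := by nlinarith [sq_nonneg ((k0:ℤ) - 1)]
        have : (k0 : ℤ) ≤ N := le_trans hk2 hsq
        exact_mod_cast this
      have hj₀n : (0 : ℤ) ≤ (n : ℤ) + j₀ ∧ (n : ℤ) + j₀ ≤ 2 * n := by
        rcases habs with h | h <;> rw [h] <;> constructor <;> push_cast <;> omega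
      set k₁ : ℕ := ((n : ℤ) + j₀).toNat with hk₁
      have hk₁Z : (k₁ : ℤ) = (n : ℤ) + j₀ := Int.toNat_of_nonneg hj₀n.1
      rw [Finset.sum_eq_single_of_mem k₁ (by rw [mem_range]; omega)]
      · have hj : (k₁ : ℤ) - n = j₀ := by omega
        rw [hj, if_pos hgej, mul_one]
        have hpar : (n + k₁) % 2 = k0 % 2 := by
          rcases habs with h | h <;> (rw [h] at hk₁Z; omega)
        push_cast
        exact neg1pow _ _ hpar
      · intro k hk hkk
        rw [if_neg, mul_zero]
        intro hge
        rw [← hgej] at hge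
        have := ge_three_inj hge
        apply hkk
        omega
    · rw [dif_neg hex]
      apply Finset.sum_eq_zero
      intro k hk
      rw [if_neg, mul_zero]
      intro hge
      set j : ℤ := (k : ℤ) - n with hj
      have h1 := two_mul_ge3 j
      rw [hge] at h1
      have hj0 : j ≠ 0 := by
        intro h
        rw [h] at h1
        norm_num at h1
        omega
      apply hex
      refine ⟨j.natAbs, by omega, ?_⟩
      rcases Int.natAbs_eq j with h | h
      · right
        rw [← h]
        omega
      · left
        have h2 : (j.natAbs : ℤ) = -j := by omega
        rw [h2]
        linarith [h1]

lemma square_eval (N n : ℕ) (hNn : N ≤ n) :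
    ∑ k ∈ range (2 * n + 1), (-1 : ℚ) ^ (n + k) * (if ge 2 ((k : ℤ) - n) = N then 1 else 0)
      = if N = 0 then 1 else if IsSquare N ∧ Even N then 2
        else if IsSquare N ∧ Odd N then -2 else 0 := by
  by_cases hN0 : N = 0
  · subst hN0
    rw [if_pos rfl]
    rw [Finset.sum_eq_single_of_mem n (by rw [mem_range]; omega)]
    · rw [show ((n : ℤ) - n) = 0 by ring, ge_zero, if_pos rfl, mul_one]
      exact Even.neg_one_pow ⟨n, rfl⟩
    · intro k _ hkn
      rw [if_neg, mul_zero]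
      intro hge
      have h1 : ((ge 2 ((k:ℤ) - n) : ℕ) : ℤ) = ((k:ℤ) - n) ^ 2 := ge_two_eq _
      rw [hge] at h1
      norm_num at h1
      have : (k : ℤ) = n := by nlinarith [sq_nonneg ((k:ℤ) - n)]
      exact hkn (by exact_mod_cast this)
  · rw [if_neg hN0]
    by_cases hsq : IsSquare N
    · obtain ⟨s, hs⟩ := hsq
      have hs0 : 0 < s := by
        rcases Nat.eq_zero_or_pos s with rfl | h
        · omega
        · exact h
      have hsn : s ≤ n := by nlinarith
      have hiff : ∀ k, k ∈ range (2 * n + 1) →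
          ((if ge 2 ((k : ℤ) - n) = N then (1:ℚ) else 0) =
            if k = n - s ∨ k = n + s then 1 else 0) := by
        intro k _
        congr 1
        apply propext
        constructor
        · intro hge
          have h1 : ((ge 2 ((k:ℤ) - n) : ℕ) : ℤ) = ((k:ℤ) - n) ^ 2 := ge_two_eq _
          rw [hge] at h1
          have h2 : (((k:ℤ) - n) - s) * (((k:ℤ) - n) + s) = 0 := by
            have hNs : ((N:ℕ):ℤ) = (s:ℤ) * s := by exact_mod_cast hs
            nlinarith [h1, hNs]
          rcases mul_eq_zero.mp h2 with h3 | h3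
          · right; omega
          · left; omega
        · intro hk
          have hgoal : ((ge 2 ((k:ℤ) - n) : ℕ) : ℤ) = ((N:ℕ):ℤ) := by
            rw [ge_two_eq]
            have hNs : ((N:ℕ):ℤ) = (s:ℤ) * s := by exact_mod_cast hs
            rcases hk with rfl | rfl
            · rw [hNs, Nat.cast_sub hsn]
              ring
            · rw [hNs]; push_cast; ring
          exact_mod_cast hgoal
      rw [Finset.sum_congr rfl (fun k hk => by rw [hiff k hk])]
      have hsupp : ∑ k ∈ range (2 * n + 1),
          (-1 : ℚ) ^ (n + k) * (if k = n - s ∨ k = n + s then 1 else 0)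
          = (-1) ^ (n + (n - s)) + (-1) ^ (n + (n + s)) := by
        rw [show (∑ k ∈ range (2 * n + 1),
            (-1 : ℚ) ^ (n + k) * (if k = n - s ∨ k = n + s then 1 else 0)) =
            ∑ k ∈ Finset.filter (fun k => k = n - s ∨ k = n + s) (range (2 * n + 1)),
              (-1 : ℚ) ^ (n + k) from by
          rw [Finset.sum_filter]
          refine Finset.sum_congr rfl fun k _ => ?_
          split_ifs <;> simp]
        have hset : Finset.filter (fun k => k = n - s ∨ k = n + s) (range (2 * n + 1))
            = {n - s, n + s} := by
          ext k
          simp only [Finset.mem_filter, Finset.mem_range, Finset.mem_insert,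
            Finset.mem_singleton]
          constructor
          · rintro ⟨_, h⟩; exact h
          · rintro (rfl | rfl) <;> constructor <;> omega
        rw [hset, Finset.sum_pair (by omega)]
      rw [hsupp]
      have hp1 : (-1 : ℚ) ^ (n + (n - s)) = (-1) ^ s := neg1pow _ _ (by omega)
      have hp2 : (-1 : ℚ) ^ (n + (n + s)) = (-1) ^ s := neg1pow _ _ (by omega)
      rw [hp1, hp2]
      have hpar : (Even N ↔ Even s) := by
        rw [hs, Nat.even_mul]
        tauto
      rcases Nat.even_or_odd s with he | ho
      · rw [if_pos ⟨⟨s, hs⟩, hpar.mpr he⟩, Even.neg_one_pow he]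
        norm_num
      · rw [if_neg, if_pos ⟨⟨s, hs⟩, by
            rw [← Nat.not_even_iff_odd]
            intro hev
            exact (Nat.not_even_iff_odd.mpr ho) (hpar.mp hev)⟩, Odd.neg_one_pow ho]
        · norm_num
        · rintro ⟨-, hev⟩
          rw [hpar] at hev
          exact (Nat.not_even_iff_odd.mpr ho) hev
    · rw [if_neg (by tauto), if_neg (by tauto)]
      apply Finset.sum_eq_zero
      intro k _
      rw [if_neg, mul_zero]
      intro hge
      apply hsq
      refine ⟨((k:ℤ) - n).natAbs, ?_⟩
      have h1 : ((ge 2 ((k:ℤ) - n) : ℕ) : ℤ) = ((k:ℤ) - n) ^ 2 := ge_two_eq _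
      rw [hge] at h1
      have h2 : (((k:ℤ) - n).natAbs : ℤ) * ((k:ℤ) - n).natAbs = ((k:ℤ)-n)^2 := by
        rw [Int.natAbs_mul_self']
        ring
      have h5 : ((N:ℕ):ℤ) = ((((k:ℤ)-n).natAbs : ℤ)) ^ 2 := by
        rw [h1, ← h2]
        ring
      have h6 : N = ((k:ℤ)-n).natAbs ^ 2 := by exact_mod_cast h5
      rw [h6]
      ring
theorem euler_type_distinctOddPartitions (n : ℕ) :
    ∑ k ∈ Finset.range (n + 1),
        (-1 : ℤ) ^ k * (distinctOddPartitions k : ℤ) * pentaCoeff ((n : ℤ) - k) =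
      if n = 0 then 1
      else if IsSquare n ∧ Even n then 2
      else if IsSquare n ∧ Odd n then -2
      else 0 := by
  set r : ℕ := n + 2 with hr
  have hpent : ∀ M : ℕ, M ≤ n →
      coeff M (∏ t ∈ range (6 * r), (1 - (X : PS) ^ (t + 1)))
        = ((pentaCoeff (M : ℤ) : ℤ) : ℚ) := by
    intro M hM
    have h1 := coeff_triple 3 (2 * r) M (by norm_num) (by omega)
    rw [prod_c3 (2 * r)] at h1
    have h6 : 3 * (2 * r) = 6 * r := by ring
    rw [h6] at h1
    rw [h1]
    exact penta_eval M (2 * r) (by omega)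
  have hmul : coeff n ((∏ i ∈ range (3 * r), (1 - (X : PS) ^ (2 * i + 1))) *
      ∏ t ∈ range (6 * r), (1 - (X : PS) ^ (t + 1)))
      = ∑ k ∈ range (n + 1), (-1 : ℚ) ^ k * (distinctOddPartitions k : ℚ) *
          ((pentaCoeff (((n - k : ℕ)) : ℤ) : ℤ) : ℚ) := by
    rw [coeff_mul, Finset.Nat.sum_antidiagonal_eq_sum_range_succ_mk]
    refine Finset.sum_congr rfl fun k hk => ?_
    rw [mem_range] at hk
    rw [coeff_Dodd k (3 * r) (by omega), hpent (n - k) (by omega)]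
  have hsq : coeff n ((∏ i ∈ range (3 * r), (1 - (X : PS) ^ (2 * i + 1))) *
      ∏ t ∈ range (6 * r), (1 - (X : PS) ^ (t + 1)))
      = (if n = 0 then 1 else if IsSquare n ∧ Even n then 2
          else if IsSquare n ∧ Odd n then -2 else (0 : ℚ)) := by
    have h2 := coeff_triple 2 (3 * r) n (le_refl 2) (by omega)
    rw [prod_c2 (3 * r)] at h2
    have h6 : 2 * (3 * r) = 6 * r := by ring
    rw [h6] at h2
    rw [h2]
    have h7 : 2 * (3 * r) + 1 = 6 * r + 1 := by ring
    have h8 := square_eval n (3 * r) (by omega)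
    rw [h7] at h8
    exact h8
  have hQ : (∑ k ∈ range (n + 1), (-1 : ℚ) ^ k * (distinctOddPartitions k : ℚ) *
      ((pentaCoeff (((n - k : ℕ)) : ℤ) : ℤ) : ℚ))
      = (if n = 0 then 1 else if IsSquare n ∧ Even n then 2
          else if IsSquare n ∧ Odd n then -2 else (0 : ℚ)) := by
    rw [← hmul, hsq]
  apply Int.cast_injective (α := ℚ)
  calc ((∑ k ∈ Finset.range (n + 1),
        (-1 : ℤ) ^ k * (distinctOddPartitions k : ℤ) * pentaCoeff ((n : ℤ) - k) : ℤ) : ℚ)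
      = ∑ k ∈ range (n + 1), (-1 : ℚ) ^ k * (distinctOddPartitions k : ℚ) *
          ((pentaCoeff (((n - k : ℕ)) : ℤ) : ℤ) : ℚ) := by
        push_cast
        refine Finset.sum_congr rfl fun k hk => ?_
        rw [mem_range] at hk
        rw [Nat.cast_sub (by omega)]
    _ = (if n = 0 then 1 else if IsSquare n ∧ Even n then 2
          else if IsSquare n ∧ Odd n then -2 else (0 : ℚ)) := hQ
    _ = (((if n = 0 then 1
      else if IsSquare n ∧ Even n then 2
      else if IsSquare n ∧ Odd n then -2
      else 0 : ℤ)) : ℚ) := by split_ifs <;> norm_num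
end
end

section
/- For every nonnegative integer n, q(n) + 2·∑_{k=1}^{n} (−1)^k · δ_s(k) · q(n−k) = ω(n), where q(m) is the number of partitions of m into pairwise distinct parts and δ_s(k) = 1 if k is a perfect square and 0 otherwise. -/
open scoped Classical

/-- `distinctPartitions m` is the number of partitions of `m` into pairwise distinct
parts (with value `1` at `m = 0`). -/
noncomputable def distinctPartitions (m : ℕ) : ℕ :=
  ((Finset.univ : Finset (Nat.Partition m)).filter fun p => p.parts.Nodup).card

open Polynomial Finset LaurentPolynomial

namespace EulerAux

/-- Gaussian binomial coefficient as a polynomial in `q = X`. -/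

noncomputable def b : ℕ → ℕ → Polynomial ℤ
  | 0, 0 => 1
  | 0, _+1 => 0
  | _+1, 0 => 1
  | m+1, r+1 => b m (r+1) + X ^ (m - r) * b m r

lemma b_zero (m : ℕ) : b m 0 = 1 := by cases m <;> rfl

lemma b_eq_zero : ∀ m r, m < r → b m r = 0 := by
  intro m
  induction m with
  | zero => intro r h; match r, h with | r+1, _ => rfl
  | succ m ih =>
      intro r h
      match r, h with
      | r+1, h =>
        show b m (r+1) + X ^ (m - r) * b m r = 0
        rw [ih _ (by omega), ih _ (by omega)]; ring

lemma b_self : ∀ m, b m m = 1 := by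
  intro m
  induction m with
  | zero => rfl
  | succ m ih =>
      show b m (m+1) + X ^ (m - m) * b m m = 1
      rw [b_eq_zero m (m+1) (by omega), ih]; simp

/-- The q-binomial theorem. -/

theorem qBT {R : Type*} [CommRing R] (q z : R) (m : ℕ) :
    ∏ k ∈ range m, (1 + z * q ^ k) =
      ∑ r ∈ range (m+1), aeval q (b m r) * q ^ (r.choose 2) * z ^ r := by
  induction m with
  | zero => simp [b]
  | succ m ih =>
      rw [prod_range_succ, ih]
      have hsplit : ∀ r ∈ range (m+2),
          aeval q (b (m+1) r) * q ^ (r.choose 2) * z ^ r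
            = aeval q (b m r) * q ^ (r.choose 2) * z ^ r
              + (if r = 0 then 0 else
                  aeval q (X ^ (m - (r-1)) * b m (r-1)) * q ^ (r.choose 2) * z ^ r) := by
        intro r _
        match r with
        | 0 => simp [b_zero]
        | r+1 =>
            show aeval q (b m (r+1) + X ^ (m - r) * b m r) * _ * _ = _
            simp only [map_add, if_neg (Nat.succ_ne_zero r), Nat.add_sub_cancel]
            ring
      rw [Finset.sum_congr rfl hsplit, Finset.sum_add_distrib]
      have h1 : ∑ r ∈ range (m+2), aeval q (b m r) * q ^ (r.choose 2) * z ^ r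
          = ∑ r ∈ range (m+1), aeval q (b m r) * q ^ (r.choose 2) * z ^ r := by
        rw [Finset.sum_range_succ, b_eq_zero m (m+1) (by omega)]; simp
      have h2 : ∑ r ∈ range (m+2),
          (if r = 0 then 0 else
            aeval q (X ^ (m - (r-1)) * b m (r-1)) * q ^ (r.choose 2) * z ^ r)
          = q ^ m * z * ∑ r ∈ range (m+1), aeval q (b m r) * q ^ (r.choose 2) * z ^ r := by
        rw [Finset.sum_range_succ' _ (m+1)]
        simp only [if_neg (Nat.succ_ne_zero _), Nat.add_sub_cancel, reduceIte, add_zero]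
        rw [Finset.mul_sum]
        refine Finset.sum_congr rfl fun r hr => ?_
        have hrm : r ≤ m := by simpa using Nat.lt_succ_iff.mp (Finset.mem_range.mp hr)
        have he' : ∀ c, m - r + (c + r) = m + c := fun c => by omega
        have he : m - r + (r.choose 2 + r) = m + r.choose 2 := he' _
        have hc : (r+1).choose 2 = r.choose 2 + r := by
          show r.choose 1 + r.choose 2 = _
          rw [Nat.choose_one_right]; omega
        rw [hc, map_mul, map_pow, aeval_X]
        calc q ^ (m-r) * aeval q (b m r) * q ^ (r.choose 2 + r) * z ^ (r+1)
            = q ^ (m - r + (r.choose 2 + r)) * aeval q (b m r) * z ^ (r+1) := by ring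
          _ = q ^ (m + r.choose 2) * aeval q (b m r) * z ^ (r+1) := by rw [he]
          _ = q ^ m * z * (aeval q (b m r) * q ^ (r.choose 2) * z ^ r) := by
              rw [pow_add, pow_succ]; ring
      rw [h1, h2]; ring

/-- key product identity for Gaussian binomials -/

theorem b_mul_prod : ∀ m r, r ≤ m →
    b m r * ∏ j ∈ Icc 1 r, (1 - X ^ j) = ∏ j ∈ Icc (m - r + 1) m, (1 - (X:Polynomial ℤ) ^ j) := by
  intro m
  induction m with
  | zero => intro r hr; interval_cases r; simp [b_zero]
  | succ m ih =>
      intro r hr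
      match r with
      | 0 => simp [b_zero]
      | r+1 =>
        show (b m (r+1) + X ^ (m - r) * b m r) * _ = _
        rcases Nat.lt_or_ge m (r+1) with hm | hm
        · -- r = m
          have hrm : r = m := by omega
          subst hrm
          rw [b_eq_zero r (r+1) (by omega), b_self]
          simp
        · have h1 := ih (r+1) hm
          have h2 := ih r (by omega)
          have hsplit : ∏ j ∈ Icc (m - (r+1) + 1) m, (1 - (X:Polynomial ℤ) ^ j)
              = (1 - X ^ (m - r)) * ∏ j ∈ Icc (m - r + 1) m, (1 - (X:Polynomial ℤ) ^ j) := by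
            have h3 : m - (r+1) + 1 = m - r := by omega
            have h4 : Icc (m - r) m = insert (m - r) (Icc (m - r + 1) m) := by
              ext x; simp only [Finset.mem_Icc, Finset.mem_insert]; omega
            rw [h3, h4, Finset.prod_insert (by simp)]
          have htop : ∏ j ∈ Icc 1 (r+1), (1 - (X:Polynomial ℤ) ^ j)
              = (∏ j ∈ Icc 1 r, (1 - (X:Polynomial ℤ) ^ j)) * (1 - X ^ (r+1)) := by
            rw [← Finset.prod_Icc_succ_top (by omega : 1 ≤ r + 1)]
          have hgoal : ∏ j ∈ Icc (m + 1 - (r+1) + 1) (m+1), (1 - (X:Polynomial ℤ) ^ j)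
              = (∏ j ∈ Icc (m - r + 1) m, (1 - (X:Polynomial ℤ) ^ j)) * (1 - X ^ (m+1)) := by
            have : m + 1 - (r+1) + 1 = m - r + 1 := by omega
            rw [this, ← Finset.prod_Icc_succ_top (by omega : m - r + 1 ≤ m + 1)]
          rw [hgoal, htop]
          have hxp : (X:Polynomial ℤ) ^ (m - r) * X ^ (r+1) = X ^ (m+1) := by
            rw [← pow_add]; congr 1; omega
          calc (b m (r+1) + X ^ (m - r) * b m r) * ((∏ j ∈ Icc 1 r, (1 - (X:Polynomial ℤ) ^ j)) * (1 - X ^ (r+1)))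
              = (b m (r+1) * ∏ j ∈ Icc 1 (r+1), (1 - (X:Polynomial ℤ) ^ j))
                + X ^ (m-r) * (1 - X^(r+1)) * (b m r * ∏ j ∈ Icc 1 r, (1 - (X:Polynomial ℤ) ^ j)) := by
                rw [htop]; ring
            _ = (1 - X ^ (m - r)) * (∏ j ∈ Icc (m - r + 1) m, (1 - (X:Polynomial ℤ) ^ j))
                + X ^ (m-r) * (1 - X^(r+1)) * ∏ j ∈ Icc (m - r + 1) m, (1 - (X:Polynomial ℤ) ^ j) := by
                rw [h1, h2, hsplit]
            _ = (∏ j ∈ Icc (m - r + 1) m, (1 - (X:Polynomial ℤ) ^ j)) * (1 - X ^ (m+1)) := by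
                rw [← hxp]; ring

def pentZ (i : ℤ) : ℤ := i * (3 * i + 1) / 2

lemma two_pentZ (i : ℤ) : 2 * pentZ i = 3 * i ^ 2 + i := by
  have h : 2 ∣ i * (3 * i + 1) := by
    rcases Int.even_or_odd i with ⟨k, hk⟩ | ⟨k, hk⟩
    · exact ⟨k * (3*i+1), by rw [hk]; ring⟩
    · exact ⟨i * (3*k+2), by rw [hk]; ring⟩
  obtain ⟨c, hc⟩ := h
  unfold pentZ
  rw [hc, Int.mul_ediv_cancel_left _ (by norm_num)]
  linear_combination -hc

lemma pentZ_nonneg (i : ℤ) : 0 ≤ pentZ i := by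
  have h := two_pentZ i
  rcases le_or_gt 0 i with hi | hi
  · nlinarith
  · nlinarith

lemma sq_le_pentZ (i : ℤ) : i ^ 2 ≤ pentZ i := by
  have h := two_pentZ i
  rcases le_or_gt 0 i with hi | hi
  · nlinarith
  · nlinarith

lemma pentZ_inj {i j : ℤ} (h : pentZ i = pentZ j) : i = j := by
  have h2 : (i - j) * (3 * (i + j) + 1) = 0 := by
    linear_combination -two_pentZ i + two_pentZ j + 2 * h
  rcases mul_eq_zero.mp h2 with h3 | h3
  · omega
  · omega

lemma two_choose_two : ∀ r : ℕ, 2 * r.choose 2 = r * (r - 1) := by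
  intro r
  induction r with
  | zero => rfl
  | succ s ih =>
      have hc : (s+1).choose 2 = s.choose 2 + s := by
        show s.choose 1 + s.choose 2 = _
        rw [Nat.choose_one_right]; omega
      rw [hc]
      cases s with
      | zero => rfl
      | succ t =>
          rw [Nat.mul_add, ih]
          simp only [Nat.add_sub_cancel]
          ring

lemma sum_T {α : Type*} (s : Finset α) (g : α → ℤ) :
    (∏ i ∈ s, (T (g i) : LaurentPolynomial ℤ)) = T (∑ i ∈ s, g i) := by
  induction s using Finset.cons_induction with
  | empty => simp
  | cons a s ha ih => rw [Finset.prod_cons, Finset.sum_cons, ih, ← T_add]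

lemma one_sub_T_neg (e : ℤ) :
    (1 - T (-e) : LaurentPolynomial ℤ) = -T (-e) * (1 - T e) := by
  rw [mul_sub, mul_one, neg_mul, ← T_add, neg_add_cancel, T_zero]
  ring

lemma toLaurent_aeval (p : Polynomial ℤ) (d : ℕ) :
    toLaurent (aeval ((X : Polynomial ℤ)^d) p) = aeval (T (d:ℤ)) p := by
  induction p using Polynomial.induction_on' with
  | add f g hf hg => rw [map_add, map_add, map_add, hf, hg]
  | monomial i c =>
      rw [aeval_monomial, aeval_monomial, map_mul, ← pow_mul, Polynomial.toLaurent_X_pow]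
      congr 1
      · have h1 : (algebraMap ℤ (Polynomial ℤ)) c = Polynomial.C c := rfl
        rw [h1, Polynomial.toLaurent_C]
        simp [eq_intCast]
      · rw [T_pow]
        congr 1
        push_cast
        ring

lemma sum_range_reflect_Z (n : ℕ) :
    2 * (∑ j ∈ Icc 1 n, (j:ℤ)) = n * (n+1) := by
  induction n with
  | zero => simp
  | succ m ih =>
      rw [Finset.sum_Icc_succ_top (by omega : 1 ≤ m+1), mul_add, ih]
      push_cast
      ring

theorem bridge (d a : ℕ) (ha : 1 ≤ a) (had : a < d) (f : ℤ → ℤ)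
    (hf : ∀ i : ℤ, 2 * f i = d * i^2 + (2*(a:ℤ) - d) * i)
    (hf0 : ∀ i : ℤ, 0 ≤ f i) (n : ℕ) :
    (∏ j ∈ Icc 1 n, (1 - (X:Polynomial ℤ) ^ (d*j - a))) *
        ∏ j ∈ range n, (1 - (X:Polynomial ℤ) ^ (d*j + a))
      = ∑ r ∈ range (2*n+1), Polynomial.C ((-1:ℤ)^(n+r)) *
          aeval ((X:Polynomial ℤ)^d) (b (2*n) r) * X ^ ((f ((r:ℤ) - n)).toNat) := by
  apply Polynomial.toLaurent_injective
  rw [map_mul, map_prod, map_prod, map_sum]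
  have hP1 : ∀ j ∈ Icc 1 n, toLaurent (1 - (X:Polynomial ℤ) ^ (d*j - a))
      = 1 - T ((d:ℤ)*j - a) := by
    intro j hj
    have hj1 : 1 ≤ j := (Finset.mem_Icc.mp hj).1
    rw [map_sub, map_one, Polynomial.toLaurent_X_pow]
    congr 2
    have : a ≤ d * j := le_trans (le_of_lt had) (Nat.le_mul_of_pos_right d hj1)
    push_cast [this]
    ring
  have hP2 : ∀ j ∈ range n, toLaurent (1 - (X:Polynomial ℤ) ^ (d*j + a))
      = 1 - T ((d:ℤ)*j + a) := by
    intro j _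
    rw [map_sub, map_one, Polynomial.toLaurent_X_pow]
    push_cast
    ring_nf
  have hterm : ∀ r ∈ range (2*n+1),
      toLaurent (Polynomial.C ((-1:ℤ)^(n+r)) * aeval ((X:Polynomial ℤ)^d) (b (2*n) r)
        * X ^ ((f ((r:ℤ) - n)).toNat))
      = (-1:LaurentPolynomial ℤ)^(n+r) * aeval (T (d:ℤ)) (b (2*n) r) * T (f ((r:ℤ) - n)) := by
    intro r _
    rw [map_mul, map_mul, Polynomial.toLaurent_C, toLaurent_aeval, Polynomial.toLaurent_X_pow]
    rw [Int.toNat_of_nonneg (hf0 _)]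
    norm_cast
  rw [Finset.prod_congr rfl hP1, Finset.prod_congr rfl hP2, Finset.sum_congr rfl hterm]
  -- Now a pure Laurent polynomial identity
  set S : ℤ := ∑ j ∈ Icc 1 n, ((d:ℤ)*j - a) with hSdef
  have hfS : f (-(n:ℤ)) = S := by
    have h1 := hf (-(n:ℤ))
    have h2 : S = (d:ℤ) * (∑ j ∈ Icc 1 n, (j:ℤ)) - a*n := by
      rw [hSdef, Finset.sum_sub_distrib, ← Finset.mul_sum, Finset.sum_const, Nat.card_Icc]
      simp only [Nat.add_sub_cancel, nsmul_eq_mul]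
      push_cast
      ring
    have h3 := sum_range_reflect_Z n
    have h4 : 2 * f (-(n:ℤ)) = 2 * S := by
      rw [h2]; linear_combination h1 - (d:ℤ) * h3
    linarith
  have hexp : ∀ r : ℕ, f (-(n:ℤ)) + (((r.choose 2 : ℤ))*d + r*((a:ℤ) - d*n)) = f ((r:ℤ) - n) := by
    intro r
    have h1 := hf ((r:ℤ) - n)
    have h2 := hf (-(n:ℤ))
    have h3 : 2*((r.choose 2 : ℤ)) = r*((r:ℤ)-1) := by
      cases r with
      | zero => simp
      | succ s =>
          have h := two_choose_two (s+1)
          have h' : (2 * ((s+1).choose 2) : ℤ) = ((s+1) * s : ℕ) := by exact_mod_cast congrArg (Nat.cast : ℕ → ℤ) h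
          push_cast at h'
          push_cast
          linear_combination h' 
    have h4 : 2 * (f (-(n:ℤ)) + (((r.choose 2 : ℤ))*d + r*((a:ℤ) - d*n))) = 2 * f ((r:ℤ) - n) := by
      linear_combination h2 + (d:ℤ)*h3 - h1
    linarith
  have hmain := qBT (T (d:ℤ) : LaurentPolynomial ℤ) (-T ((a:ℤ) - d*n)) (2*n)
  have hLmain : ∏ k ∈ range (2*n), (1 + (-T ((a:ℤ) - (d:ℤ)*n)) * (T (d:ℤ))^k)
      = (((-1:LaurentPolynomial ℤ)^n * T (-S)) *
          ((∏ j ∈ Icc 1 n, (1 - T ((d:ℤ)*j - a))) *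
            (∏ j ∈ range n, (1 - T ((d:ℤ)*j + a))))) := by
    have hfac : ∀ k ∈ range (2*n),
        (1 + (-T ((a:ℤ) - (d:ℤ)*n)) * (T (d:ℤ))^k : LaurentPolynomial ℤ)
          = 1 - T ((a:ℤ) + d*k - d*n) := by
      intro k _
      rw [T_pow, neg_mul, ← T_add]
      congr 2
      ring
    rw [Finset.prod_congr rfl hfac, two_mul, Finset.prod_range_add]
    have h2 : ∀ j ∈ range n, (1 - T ((a:ℤ) + d*↑(n + j) - d*n) : LaurentPolynomial ℤ)
        = 1 - T ((d:ℤ)*j + a) := by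
      intro j _
      congr 1
      push_cast
      ring
    have h1 : ∀ k ∈ range n, (1 - T ((a:ℤ) + d*k - d*n) : LaurentPolynomial ℤ)
        = ((-1) * T (-((d:ℤ)*((n:ℤ) - k) - a))) * (1 - T ((d:ℤ)*((n:ℤ) - k) - a)) := by
      intro k _
      have he : (a:ℤ) + d*k - d*n = -((d:ℤ)*((n:ℤ) - k) - a) := by ring
      rw [he, one_sub_T_neg]
      ring
    rw [Finset.prod_congr rfl h1, Finset.prod_congr rfl h2]
    rw [Finset.prod_mul_distrib, Finset.prod_mul_distrib, Finset.prod_const, Finset.card_range, sum_T]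
    have hsum : (∑ k ∈ range n, -((d:ℤ)*((n:ℤ) - k) - a)) = -S := by
      rw [hSdef, ← Finset.sum_neg_distrib]
      refine Finset.sum_nbij' (fun k => n - k) (fun j => n - j) ?_ ?_ ?_ ?_ ?_
      · intro k hk; simp only [Finset.mem_range] at hk; simp only [Finset.mem_Icc]; omega
      · intro j hj; simp only [Finset.mem_Icc] at hj; simp only [Finset.mem_range]; omega
      · intro k hk; simp only [Finset.mem_range] at hk; show n - (n - k) = k; omega
      · intro j hj; simp only [Finset.mem_Icc] at hj; show n - (n - j) = j; omega
      · intro k hk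
        simp only [Finset.mem_range] at hk
        have hc : ((n - k : ℕ) : ℤ) = (n:ℤ) - k := by omega
        show -((d:ℤ)*((n:ℤ) - k) - a) = -((d:ℤ)*((n - k : ℕ):ℤ) - a)
        rw [hc]
    have hprod : (∏ k ∈ range n, (1 - T ((d:ℤ)*((n:ℤ) - k) - a) : LaurentPolynomial ℤ))
        = ∏ j ∈ Icc 1 n, (1 - T ((d:ℤ)*j - a)) := by
      refine Finset.prod_nbij' (fun k => n - k) (fun j => n - j) ?_ ?_ ?_ ?_ ?_
      · intro k hk; simp only [Finset.mem_range] at hk; simp only [Finset.mem_Icc]; omega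
      · intro j hj; simp only [Finset.mem_Icc] at hj; simp only [Finset.mem_range]; omega
      · intro k hk; simp only [Finset.mem_range] at hk; show n - (n - k) = k; omega
      · intro j hj; simp only [Finset.mem_Icc] at hj; show n - (n - j) = j; omega
      · intro k hk
        simp only [Finset.mem_range] at hk
        have hc : ((n - k : ℕ) : ℤ) = (n:ℤ) - k := by omega
        show (1 - T ((d:ℤ)*((n:ℤ) - k) - a) : LaurentPolynomial ℤ) = 1 - T ((d:ℤ)*((n - k : ℕ):ℤ) - a)
        rw [hc]
    rw [hsum, hprod]
    ring
  have hR : ∀ r ∈ range (2*n+1),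
      (aeval (T (d:ℤ)) (b (2*n) r) * (T (d:ℤ))^(r.choose 2) *
        (-T ((a:ℤ) - (d:ℤ)*n))^r : LaurentPolynomial ℤ)
      = (-1:LaurentPolynomial ℤ)^r * aeval (T (d:ℤ)) (b (2*n) r) *
          T (((r.choose 2 : ℤ))*d + r*((a:ℤ) - d*n)) := by
    intro r _
    rw [neg_pow, T_pow, T_pow, T_add]
    ring
  calc (∏ j ∈ Icc 1 n, (1 - T ((d:ℤ)*j - a) : LaurentPolynomial ℤ)) *
          ∏ j ∈ range n, (1 - T ((d:ℤ)*j + a))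
      = ((-1:LaurentPolynomial ℤ)^n * T (f (-(n:ℤ)))) *
          ((((-1:LaurentPolynomial ℤ)^n * T (-S)) *
            ((∏ j ∈ Icc 1 n, (1 - T ((d:ℤ)*j - a))) *
              (∏ j ∈ range n, (1 - T ((d:ℤ)*j + a)))))) := by
        have : ((-1:LaurentPolynomial ℤ)^n * T (f (-(n:ℤ)))) *
            ((-1:LaurentPolynomial ℤ)^n * T (-S)) = 1 := by
          rw [hfS]
          calc ((-1:LaurentPolynomial ℤ)^n * T S) * ((-1:LaurentPolynomial ℤ)^n * T (-S))
              = ((-1:LaurentPolynomial ℤ)*(-1))^n * (T S * T (-S)) := by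
                rw [mul_pow]; ring
            _ = 1 := by rw [neg_mul_neg, one_mul, one_pow, ← T_add, add_neg_cancel, T_zero, one_mul]
        calc (∏ j ∈ Icc 1 n, (1 - T ((d:ℤ)*j - a) : LaurentPolynomial ℤ)) *
                ∏ j ∈ range n, (1 - T ((d:ℤ)*j + a))
            = (((-1:LaurentPolynomial ℤ)^n * T (f (-(n:ℤ)))) *
                ((-1:LaurentPolynomial ℤ)^n * T (-S))) *
                ((∏ j ∈ Icc 1 n, (1 - T ((d:ℤ)*j - a))) *
                  (∏ j ∈ range n, (1 - T ((d:ℤ)*j + a)))) := by rw [this, one_mul]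
          _ = _ := by ring
    _ = ((-1:LaurentPolynomial ℤ)^n * T (f (-(n:ℤ)))) *
          (∑ r ∈ range (2*n+1), aeval (T (d:ℤ)) (b (2*n) r) * (T (d:ℤ))^(r.choose 2) *
            (-T ((a:ℤ) - (d:ℤ)*n))^r) := by
        rw [← hLmain]
        rw [hmain]
        rfl
    _ = ∑ r ∈ range (2*n+1), (-1:LaurentPolynomial ℤ)^(n+r) *
          aeval (T (d:ℤ)) (b (2*n) r) * T (f ((r:ℤ) - n)) := by
        rw [Finset.sum_congr rfl hR, Finset.mul_sum]
        refine Finset.sum_congr rfl fun r _ => ?_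
        rw [← hexp r]
        simp only [T_add]
        rw [pow_add]
        ring

/-- congruence of polynomials modulo `X^N` -/

def Rel (N : ℕ) (p q : Polynomial ℤ) : Prop := ∀ m, m < N → p.coeff m = q.coeff m

lemma Rel.refl (N : ℕ) (p : Polynomial ℤ) : Rel N p p := fun _ _ => rfl

lemma Rel.symm {N p q} (h : Rel N p q) : Rel N q p := fun m hm => (h m hm).symm

lemma Rel.trans {N p q r} (h1 : Rel N p q) (h2 : Rel N q r) : Rel N p r :=
  fun m hm => (h1 m hm).trans (h2 m hm)

lemma Rel.mul {N p p' q q'} (h1 : Rel N p p') (h2 : Rel N q q') : Rel N (p*q) (p'*q') := by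
  intro m hm
  rw [coeff_mul, coeff_mul]
  refine Finset.sum_congr rfl fun ij hij => ?_
  have hij' := Finset.HasAntidiagonal.mem_antidiagonal.mp hij
  rw [h1 ij.1 (by omega), h2 ij.2 (by omega)]

lemma Rel.sum {N : ℕ} {α : Type*} (s : Finset α) (f g : α → Polynomial ℤ)
    (h : ∀ i ∈ s, Rel N (f i) (g i)) : Rel N (∑ i ∈ s, f i) (∑ i ∈ s, g i) := by
  intro m hm
  rw [finset_sum_coeff, finset_sum_coeff]
  exact Finset.sum_congr rfl fun i hi => h i hi m hm

lemma Rel.prod {N : ℕ} {α : Type*} (s : Finset α) (f g : α → Polynomial ℤ)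
    (h : ∀ i ∈ s, Rel N (f i) (g i)) : Rel N (∏ i ∈ s, f i) (∏ i ∈ s, g i) := by
  induction s using Finset.cons_induction with
  | empty => intro m hm; rfl
  | cons a s ha ih =>
      rw [Finset.prod_cons, Finset.prod_cons]
      exact Rel.mul (h a (Finset.mem_cons_self a s)) (ih fun i hi => h i (Finset.mem_cons_of_mem hi))

lemma rel_X_pow_zero {N e : ℕ} (h : N ≤ e) : Rel N ((X:Polynomial ℤ)^e) 0 := by
  intro m hm
  rw [coeff_X_pow, coeff_zero, if_neg (by omega)]

lemma rel_one_sub_X_pow {N e : ℕ} (h : N ≤ e) : Rel N (1 - (X:Polynomial ℤ)^e) 1 := by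
  intro m hm
  rw [coeff_sub, coeff_X_pow, if_neg (by omega), sub_zero]

lemma rel_zero_mul {N : ℕ} {p : Polynomial ℤ} (h : Rel N p 0) (q : Polynomial ℤ) :
    Rel N (p * q) 0 := by
  have := Rel.mul h (Rel.refl N q)
  intro m hm
  rw [this m hm, zero_mul]

lemma Rel.cancel {N : ℕ} {p q c : Polynomial ℤ} (hc : c.coeff 0 = 1)
    (h : Rel N (p * c) (q * c)) : Rel N p q := by
  intro m hm
  induction m using Nat.strong_induction_on with
  | _ m ih =>
      have h1 := h m hm
      rw [coeff_mul, coeff_mul, Finset.Nat.sum_antidiagonal_eq_sum_range_succ_mk,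
        Finset.Nat.sum_antidiagonal_eq_sum_range_succ_mk, Finset.sum_range_succ,
        Finset.sum_range_succ] at h1
      have h2 : ∑ k ∈ range m, p.coeff k * c.coeff (m - k)
          = ∑ k ∈ range m, q.coeff k * c.coeff (m - k) := by
        refine Finset.sum_congr rfl fun k hk => ?_
        have hk' := Finset.mem_range.mp hk
        rw [ih k hk' (by omega)]
      rw [h2] at h1
      have h3 : p.coeff m * c.coeff (m - m) = q.coeff m * c.coeff (m - m) := by linarith
      rw [Nat.sub_self, hc, mul_one, mul_one] at h3
      exact h3

lemma b_mul_prod_d (d m r : ℕ) (hr : r ≤ m) :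
    aeval ((X:Polynomial ℤ)^d) (b m r) * ∏ j ∈ Icc 1 r, (1 - (X:Polynomial ℤ) ^ (d*j))
      = ∏ j ∈ Icc (m - r + 1) m, (1 - (X:Polynomial ℤ) ^ (d*j)) := by
  have h := congrArg (aeval ((X:Polynomial ℤ)^d)) (b_mul_prod m r hr)
  rw [map_mul, map_prod, map_prod] at h
  have hfac : ∀ (j : ℕ), aeval ((X:Polynomial ℤ)^d) (1 - (X:Polynomial ℤ)^j)
      = 1 - (X:Polynomial ℤ)^(d*j) := by
    intro j
    rw [map_sub, map_one, map_pow, aeval_X, ← pow_mul]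
  simp only [hfac] at h
  exact h

theorem truncated (d a : ℕ) (ha : 1 ≤ a) (had : a < d) (f : ℤ → ℤ)
    (hf : ∀ i : ℤ, 2 * f i = d * i^2 + (2*(a:ℤ) - d) * i)
    (hf0 : ∀ i : ℤ, 0 ≤ f i) (n : ℕ)
    (hgrow : ∀ i : ℤ, f i < n → (n:ℤ) ≤ d * ((n:ℤ) - |i| + 1)) :
    Rel n
      (((∏ j ∈ Icc 1 n, (1 - (X:Polynomial ℤ) ^ (d*j - a))) *
        ∏ j ∈ range n, (1 - (X:Polynomial ℤ) ^ (d*j + a))) *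
        ∏ j ∈ Icc 1 (2*n), (1 - (X:Polynomial ℤ) ^ (d*j)))
      (∑ r ∈ range (2*n+1), Polynomial.C ((-1:ℤ)^(n+r)) * X ^ ((f ((r:ℤ) - n)).toNat)) := by
  rw [bridge d a ha had f hf hf0 n, Finset.sum_mul]
  refine Rel.sum _ _ _ fun r hr => ?_
  have hr' : r ≤ 2*n := by simpa using Nat.lt_succ_iff.mp (Finset.mem_range.mp hr)
  set e : ℕ := (f ((r:ℤ) - n)).toNat with he
  rcases le_or_gt n e with hne | hne
  · -- both sides are ≡ 0
    have h0 : Rel n ((X:Polynomial ℤ)^e) 0 := rel_X_pow_zero hne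
    have hL : Rel n (Polynomial.C ((-1:ℤ)^(n+r)) * aeval ((X:Polynomial ℤ)^d) (b (2*n) r) * X ^ e *
        ∏ j ∈ Icc 1 (2*n), (1 - (X:Polynomial ℤ) ^ (d*j))) 0 := by
      have heq : Polynomial.C ((-1:ℤ)^(n+r)) * aeval ((X:Polynomial ℤ)^d) (b (2*n) r) * X ^ e *
          ∏ j ∈ Icc 1 (2*n), (1 - (X:Polynomial ℤ) ^ (d*j))
          = (X:Polynomial ℤ)^e * (Polynomial.C ((-1:ℤ)^(n+r)) * aeval ((X:Polynomial ℤ)^d) (b (2*n) r) *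
            ∏ j ∈ Icc 1 (2*n), (1 - (X:Polynomial ℤ) ^ (d*j))) := by ring
      rw [heq]
      exact rel_zero_mul h0 _
    have hRr : Rel n (Polynomial.C ((-1:ℤ)^(n+r)) * X ^ e) 0 := by
      have heq : Polynomial.C ((-1:ℤ)^(n+r)) * (X:Polynomial ℤ) ^ e
          = (X:Polynomial ℤ)^e * Polynomial.C ((-1:ℤ)^(n+r)) := by ring
      rw [heq]
      exact rel_zero_mul h0 _
    exact hL.trans hRr.symm
  · -- the binomial * tail product is ≡ 1
    have hfe : f ((r:ℤ) - n) = e := (Int.toNat_of_nonneg (hf0 _)).symm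
    have hflt : f ((r:ℤ) - n) < n := by omega
    have hgr := hgrow _ hflt
    -- key bound : for j ≥ min(2n-r+1, r+1) we have n ≤ d*j
    have hbound : ∀ j : ℕ, (2*n - r + 1 ≤ j ∨ r + 1 ≤ j) → n ≤ d * j := by
      intro j hj
      have habs : |(r:ℤ) - n| ≤ n := by
        rw [abs_le]; constructor <;> [omega; omega]
      have h1 : ((n:ℤ) - |(r:ℤ) - n| + 1) ≤ j := by
        rcases hj with hj | hj
        · have : ((2*n - r + 1 : ℕ) : ℤ) = 2*(n:ℤ) - r + 1 := by omega
          rcases abs_cases ((r:ℤ) - n) with ⟨habs1, _⟩ | ⟨habs1, _⟩ <;> omega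
        · rcases abs_cases ((r:ℤ) - n) with ⟨habs1, _⟩ | ⟨habs1, _⟩ <;> omega
      have h2 : (n:ℤ) ≤ d * j := by
        calc (n:ℤ) ≤ d * ((n:ℤ) - |(r:ℤ) - n| + 1) := hgr
          _ ≤ d * j := by
              apply mul_le_mul_of_nonneg_left h1 (by positivity)
      exact_mod_cast h2
    -- split the product P
    have hsplit : ∏ j ∈ Icc 1 (2*n), (1 - (X:Polynomial ℤ) ^ (d*j))
        = (∏ j ∈ Icc 1 r, (1 - (X:Polynomial ℤ) ^ (d*j))) *
          ∏ j ∈ Ioc r (2*n), (1 - (X:Polynomial ℤ) ^ (d*j)) := by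
      rw [show Icc 1 (2*n) = Ioc 0 (2*n) from Finset.Icc_add_one_left_eq_Ioc 0 (2*n),
        show Icc 1 r = Ioc 0 r from Finset.Icc_add_one_left_eq_Ioc 0 r]
      exact (Finset.prod_Ioc_consecutive _ (Nat.zero_le r) hr').symm
    have hW : Rel n (aeval ((X:Polynomial ℤ)^d) (b (2*n) r) *
        ∏ j ∈ Icc 1 (2*n), (1 - (X:Polynomial ℤ) ^ (d*j))) 1 := by
      rw [hsplit, ← mul_assoc, b_mul_prod_d d (2*n) r hr']
      have hA : Rel n (∏ j ∈ Icc (2*n - r + 1) (2*n), (1 - (X:Polynomial ℤ) ^ (d*j)))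
          (∏ j ∈ Icc (2*n - r + 1) (2*n), (1 : Polynomial ℤ)) := by
        refine Rel.prod _ _ _ fun j hj => ?_
        have hj' := (Finset.mem_Icc.mp hj).1
        exact rel_one_sub_X_pow (hbound j (Or.inl hj'))
      have hB : Rel n (∏ j ∈ Ioc r (2*n), (1 - (X:Polynomial ℤ) ^ (d*j)))
          (∏ j ∈ Ioc r (2*n), (1 : Polynomial ℤ)) := by
        refine Rel.prod _ _ _ fun j hj => ?_
        have hj' := (Finset.mem_Ioc.mp hj).1
        exact rel_one_sub_X_pow (hbound j (Or.inr hj'))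
      have := Rel.mul hA hB
      rw [Finset.prod_const_one, Finset.prod_const_one, mul_one] at this
      exact this
    have heq : Polynomial.C ((-1:ℤ)^(n+r)) * aeval ((X:Polynomial ℤ)^d) (b (2*n) r) * X ^ e *
        ∏ j ∈ Icc 1 (2*n), (1 - (X:Polynomial ℤ) ^ (d*j))
        = (Polynomial.C ((-1:ℤ)^(n+r)) * X ^ e) * (aeval ((X:Polynomial ℤ)^d) (b (2*n) r) *
          ∏ j ∈ Icc 1 (2*n), (1 - (X:Polynomial ℤ) ^ (d*j))) := by ring
    rw [heq]
    have := Rel.mul (Rel.refl n (Polynomial.C ((-1:ℤ)^(n+r)) * X ^ e)) hW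
    rw [mul_one] at this
    exact this

noncomputable def Phi (n : ℕ) : Polynomial ℤ :=
  ∑ r ∈ range (2*n+1), Polynomial.C ((-1:ℤ)^(n+r)) * X ^ ((pentZ ((r:ℤ) - n)).toNat)

noncomputable def Theta (n : ℕ) : Polynomial ℤ :=
  ∑ r ∈ range (2*n+1), Polynomial.C ((-1:ℤ)^(n+r)) * X ^ ((((r:ℤ) - n)^2).toNat)

noncomputable def E (M : ℕ) : Polynomial ℤ := ∏ e ∈ Ioc 0 M, (1 - X^e)

lemma pnt_trunc (n : ℕ) :
    Rel n
      (((∏ j ∈ Icc 1 n, (1 - (X:Polynomial ℤ) ^ (3*j - 2))) *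
        ∏ j ∈ range n, (1 - (X:Polynomial ℤ) ^ (3*j + 2))) *
        ∏ j ∈ Icc 1 (2*n), (1 - (X:Polynomial ℤ) ^ (3*j)))
      (Phi n) := by
  refine truncated 3 2 (by norm_num) (by norm_num) pentZ ?_ pentZ_nonneg n ?_
  · intro i
    have := two_pentZ i
    push_cast
    linarith
  · intro i hlt
    have h1 := sq_le_pentZ i
    have h2 : |i|^2 < (n:ℤ) := by
      rw [sq_abs]; omega
    have h3 : 3 * |i| ≤ 2*(n:ℤ) + 3 := by
      nlinarith [abs_nonneg i, sq_nonneg (2*|i| - 3)]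
    push_cast
    linarith

lemma gauss_trunc (n : ℕ) :
    Rel n
      (((∏ j ∈ Icc 1 n, (1 - (X:Polynomial ℤ) ^ (2*j - 1))) *
        ∏ j ∈ range n, (1 - (X:Polynomial ℤ) ^ (2*j + 1))) *
        ∏ j ∈ Icc 1 (2*n), (1 - (X:Polynomial ℤ) ^ (2*j)))
      (Theta n) := by
  refine truncated 2 1 (by norm_num) (by norm_num) (fun i => i^2) ?_ (fun i => sq_nonneg i) n ?_
  · intro i; push_cast; ring
  · intro i hlt
    have hlt' : i^2 < (n:ℤ) := hlt
    have h2 : |i|^2 < (n:ℤ) := by rw [sq_abs]; omega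
    have h3 : 2 * |i| ≤ (n:ℤ) + 2 := by
      nlinarith [abs_nonneg i, sq_nonneg (|i| - 1)]
    push_cast
    linarith

lemma rel_prod_shape {N M : ℕ} {A : Finset ℕ} (h1 : Ioc 0 M ⊆ A)
    (h2 : ∀ e ∈ A, e ∉ Ioc 0 M → N ≤ e) :
    Rel N (∏ e ∈ A, (1 - (X:Polynomial ℤ)^e)) (E M) := by
  rw [← Finset.prod_sdiff h1]
  have htail : Rel N (∏ e ∈ A \ Ioc 0 M, (1 - (X:Polynomial ℤ)^e)) 1 := by
    have := Rel.prod (A \ Ioc 0 M) _ (fun _ => (1:Polynomial ℤ)) (fun e he => by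
      have hm := Finset.mem_sdiff.mp he
      exact rel_one_sub_X_pow (h2 e hm.1 hm.2))
    rw [Finset.prod_const_one] at this
    exact this
  have := Rel.mul htail (Rel.refl N (E M))
  rw [one_mul] at this
  exact this

lemma E_tail {N M M' : ℕ} (h : N ≤ M) (h' : M ≤ M') : Rel N (E M') (E M) := by
  unfold E
  rw [← Finset.prod_Ioc_consecutive _ (Nat.zero_le M) h']
  have htail : Rel N (∏ e ∈ Ioc M M', (1 - (X:Polynomial ℤ)^e)) 1 := by
    have := Rel.prod (Ioc M M') (fun e => 1 - (X:Polynomial ℤ)^e) (fun _ => (1:Polynomial ℤ))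
      (fun e he => by
      have hm := Finset.mem_Ioc.mp he
      exact rel_one_sub_X_pow (le_trans h (Nat.le_of_lt hm.1)))
    rw [Finset.prod_const_one] at this
    exact this
  have := Rel.mul (Rel.refl N (∏ e ∈ Ioc 0 M, (1 - (X:Polynomial ℤ)^e))) htail
  rw [mul_one] at this
  exact this

lemma pnt_E (N : ℕ) : Rel N (E (3*N)) (Phi N) := by
  have h1 := pnt_trunc N
  -- convert the product into a product over a union of images
  have e1 : (∏ j ∈ Icc 1 N, (1 - (X:Polynomial ℤ) ^ (3*j - 2)))
      = ∏ e ∈ (Icc 1 N).image (fun j => 3*j - 2), (1 - (X:Polynomial ℤ)^e) := by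
    rw [Finset.prod_image]
    intro x hx y hy hxy
    simp only [Finset.mem_coe, Finset.mem_Icc] at hx hy
    simp only at hxy
    omega
  have e2 : (∏ j ∈ range N, (1 - (X:Polynomial ℤ) ^ (3*j + 2)))
      = ∏ e ∈ (range N).image (fun j => 3*j + 2), (1 - (X:Polynomial ℤ)^e) := by
    rw [Finset.prod_image]
    intro x hx y hy hxy
    simp only at hxy
    omega
  have e3 : (∏ j ∈ Icc 1 (2*N), (1 - (X:Polynomial ℤ) ^ (3*j)))
      = ∏ e ∈ (Icc 1 (2*N)).image (fun j => 3*j), (1 - (X:Polynomial ℤ)^e) := by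
    rw [Finset.prod_image]
    intro x hx y hy hxy
    simp only at hxy
    omega
  set A := ((Icc 1 N).image (fun j => 3*j - 2)) ∪ ((range N).image (fun j => 3*j + 2))
      ∪ ((Icc 1 (2*N)).image (fun j => 3*j)) with hA
  have hd1 : Disjoint ((Icc 1 N).image (fun j => 3*j - 2)) ((range N).image (fun j => 3*j + 2)) := by
    rw [Finset.disjoint_left]
    intro e he1 he2
    simp only [Finset.mem_image, Finset.mem_Icc, Finset.mem_range] at he1 he2
    obtain ⟨x, hx, hex⟩ := he1
    obtain ⟨y, hy, hey⟩ := he2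
    omega
  have hd2 : Disjoint (((Icc 1 N).image (fun j => 3*j - 2)) ∪ ((range N).image (fun j => 3*j + 2)))
      ((Icc 1 (2*N)).image (fun j => 3*j)) := by
    rw [Finset.disjoint_left]
    intro e he1 he2
    simp only [Finset.mem_union, Finset.mem_image, Finset.mem_Icc, Finset.mem_range] at he1 he2
    obtain ⟨y, hy, hey⟩ := he2
    rcases he1 with ⟨x, hx, hex⟩ | ⟨x, hx, hex⟩ <;> omega
  have hprodA : (((∏ j ∈ Icc 1 N, (1 - (X:Polynomial ℤ) ^ (3*j - 2))) *
        ∏ j ∈ range N, (1 - (X:Polynomial ℤ) ^ (3*j + 2))) *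
        ∏ j ∈ Icc 1 (2*N), (1 - (X:Polynomial ℤ) ^ (3*j)))
      = ∏ e ∈ A, (1 - (X:Polynomial ℤ)^e) := by
    rw [e1, e2, e3, hA, Finset.prod_union hd2, Finset.prod_union hd1]
  have hshape : Rel N (∏ e ∈ A, (1 - (X:Polynomial ℤ)^e)) (E (3*N)) := by
    apply rel_prod_shape
    · intro e he
      simp only [Finset.mem_Ioc] at he
      rw [hA]
      simp only [Finset.mem_union, Finset.mem_image, Finset.mem_Icc, Finset.mem_range]
      have hmod : e % 3 = 0 ∨ e % 3 = 1 ∨ e % 3 = 2 := by omega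
      rcases hmod with h | h | h
      · right; exact ⟨e / 3, by omega, by omega⟩
      · left; left; exact ⟨(e + 2) / 3, by omega, by omega⟩
      · left; right; exact ⟨(e - 2) / 3, by omega, by omega⟩
    · intro e heA heM
      rw [hA] at heA
      simp only [Finset.mem_union, Finset.mem_image, Finset.mem_Icc, Finset.mem_range] at heA
      simp only [Finset.mem_Ioc, not_and, not_le] at heM
      rcases heA with (⟨x, hx, hex⟩ | ⟨x, hx, hex⟩) | ⟨x, hx, hex⟩ <;> omega
  rw [hprodA] at h1
  exact (hshape.symm.trans h1)

noncomputable def Od (N : ℕ) : Polynomial ℤ := ∏ j ∈ Icc 1 N, (1 - X ^ (2*j - 1))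

lemma gauss_E (N : ℕ) : Rel N (Od N * E (2*N)) (Theta N) := by
  have h1 := gauss_trunc N
  have e2 : (∏ j ∈ range N, (1 - (X:Polynomial ℤ) ^ (2*j + 1)))
      = ∏ e ∈ (range N).image (fun j => 2*j + 1), (1 - (X:Polynomial ℤ)^e) := by
    rw [Finset.prod_image]; intro x hx y hy hxy; simp only at hxy; omega
  have e3 : (∏ j ∈ Icc 1 (2*N), (1 - (X:Polynomial ℤ) ^ (2*j)))
      = ∏ e ∈ (Icc 1 (2*N)).image (fun j => 2*j), (1 - (X:Polynomial ℤ)^e) := by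
    rw [Finset.prod_image]; intro x hx y hy hxy; simp only at hxy; omega
  set B := ((range N).image (fun j => 2*j + 1)) ∪ ((Icc 1 (2*N)).image (fun j => 2*j)) with hB
  have hd : Disjoint ((range N).image (fun j => 2*j + 1)) ((Icc 1 (2*N)).image (fun j => 2*j)) := by
    rw [Finset.disjoint_left]
    intro e he1 he2
    simp only [Finset.mem_image, Finset.mem_Icc, Finset.mem_range] at he1 he2
    obtain ⟨x, hx, hex⟩ := he1
    obtain ⟨y, hy, hey⟩ := he2
    omega
  have hshape : Rel N (∏ e ∈ B, (1 - (X:Polynomial ℤ)^e)) (E (2*N)) := by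
    apply rel_prod_shape
    · intro e he
      simp only [Finset.mem_Ioc] at he
      rw [hB]
      simp only [Finset.mem_union, Finset.mem_image, Finset.mem_Icc, Finset.mem_range]
      have hmod : e % 2 = 0 ∨ e % 2 = 1 := by omega
      rcases hmod with h | h
      · right; exact ⟨e / 2, by omega, by omega⟩
      · left; exact ⟨(e - 1) / 2, by omega, by omega⟩
    · intro e heA heM
      rw [hB] at heA
      simp only [Finset.mem_union, Finset.mem_image, Finset.mem_Icc, Finset.mem_range] at heA
      simp only [Finset.mem_Ioc, not_and, not_le] at heM
      rcases heA with ⟨x, hx, hex⟩ | ⟨x, hx, hex⟩ <;> omega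
  have hre : (((∏ j ∈ Icc 1 N, (1 - (X:Polynomial ℤ) ^ (2*j - 1))) *
        ∏ j ∈ range N, (1 - (X:Polynomial ℤ) ^ (2*j + 1))) *
        ∏ j ∈ Icc 1 (2*N), (1 - (X:Polynomial ℤ) ^ (2*j)))
      = Od N * ∏ e ∈ B, (1 - (X:Polynomial ℤ)^e) := by
    rw [e2, e3, hB, Finset.prod_union hd, Od, mul_assoc]
  rw [hre] at h1
  exact (Rel.mul (Rel.refl N (Od N)) hshape).symm.trans h1

noncomputable def D (N : ℕ) : Polynomial ℤ := ∏ i ∈ Ioc 0 N, (1 + X ^ i)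

lemma DE_eq (N : ℕ) : D N * E N = ∏ i ∈ Ioc 0 N, (1 - (X:Polynomial ℤ) ^ (2*i)) := by
  rw [D, E, ← Finset.prod_mul_distrib]
  refine Finset.prod_congr rfl fun i _ => ?_
  ring

lemma Od_mul (N : ℕ) : Od N * (∏ i ∈ Ioc 0 N, (1 - (X:Polynomial ℤ) ^ (2*i))) = E (2*N) := by
  have e1 : Od N = ∏ e ∈ (Icc 1 N).image (fun j => 2*j - 1), (1 - (X:Polynomial ℤ)^e) := by
    rw [Od, Finset.prod_image]
    intro x hx y hy hxy
    simp only [Finset.mem_coe, Finset.mem_Icc] at hx hy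
    simp only at hxy
    omega
  have e2 : (∏ i ∈ Ioc 0 N, (1 - (X:Polynomial ℤ) ^ (2*i)))
      = ∏ e ∈ (Ioc 0 N).image (fun j => 2*j), (1 - (X:Polynomial ℤ)^e) := by
    rw [Finset.prod_image]; intro x hx y hy hxy; simp only at hxy; omega
  have hd : Disjoint ((Icc 1 N).image (fun j => 2*j - 1)) ((Ioc 0 N).image (fun j => 2*j)) := by
    rw [Finset.disjoint_left]
    intro e he1 he2
    simp only [Finset.mem_image, Finset.mem_Icc, Finset.mem_Ioc] at he1 he2
    obtain ⟨x, hx, hex⟩ := he1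
    obtain ⟨y, hy, hey⟩ := he2
    omega
  have hun : ((Icc 1 N).image (fun j => 2*j - 1)) ∪ ((Ioc 0 N).image (fun j => 2*j))
      = Ioc 0 (2*N) := by
    ext e
    simp only [Finset.mem_union, Finset.mem_image, Finset.mem_Icc, Finset.mem_Ioc]
    constructor
    · rintro (⟨x, hx, hex⟩ | ⟨x, hx, hex⟩) <;> omega
    · intro he
      have hmod : e % 2 = 0 ∨ e % 2 = 1 := by omega
      rcases hmod with h | h
      · right; exact ⟨e / 2, by omega, by omega⟩
      · left; exact ⟨(e + 1) / 2, by omega, by omega⟩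
  rw [e1, e2, ← Finset.prod_union hd, hun, E]

lemma coeff_zero_prod_one_sub (s : Finset ℕ) (h : ∀ e ∈ s, 0 < e) :
    (∏ e ∈ s, (1 - (X:Polynomial ℤ)^e)).coeff 0 = 1 := by
  induction s using Finset.cons_induction with
  | empty => simp
  | cons a s ha ih =>
      rw [Finset.prod_cons, Polynomial.mul_coeff_zero,
        ih (fun e he => h e (Finset.mem_cons_of_mem he)), mul_one]
      have ha0 : a ≠ 0 := Nat.pos_iff_ne_zero.mp (h a (Finset.mem_cons_self a s))
      simp [coeff_sub, coeff_one, coeff_X_pow, ha0]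
      omega

lemma coeff_zero_E (M : ℕ) : (E M).coeff 0 = 1 := by
  rw [E]
  exact coeff_zero_prod_one_sub _ (fun e he => (Finset.mem_Ioc.mp he).1)

theorem main_rel (N : ℕ) : Rel N (Theta N * D N) (Phi N) := by
  apply Rel.cancel (coeff_zero_E N)
  have hA : Rel N (Theta N * D N * E N) (E (2*N) * E (2*N)) := by
    have h1 : Theta N * D N * E N = Theta N * (D N * E N) := by ring
    rw [h1, DE_eq]
    have h2 : Rel N (Theta N) (Od N * E (2*N)) := (gauss_E N).symm
    have h3 := Rel.mul h2 (Rel.refl N (∏ i ∈ Ioc 0 N, (1 - (X:Polynomial ℤ) ^ (2*i))))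
    refine h3.trans ?_
    have h4 : Od N * E (2*N) * (∏ i ∈ Ioc 0 N, (1 - (X:Polynomial ℤ) ^ (2*i)))
        = E (2*N) * (Od N * (∏ i ∈ Ioc 0 N, (1 - (X:Polynomial ℤ) ^ (2*i)))) := by ring
    rw [h4, Od_mul]
    exact Rel.refl N _
  have hB : Rel N (Phi N * E N) (E (2*N) * E (2*N)) := by
    have h5 : Rel N (Phi N) (E (2*N)) :=
      ((pnt_E N).symm).trans (E_tail (by omega) (by omega))
    have h6 : Rel N (E N) (E (2*N)) := (E_tail (le_refl N) (by omega)).symm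
    exact Rel.mul h5 h6
  exact hA.trans hB.symm

lemma neg_one_pow_congr {a b : ℕ} (h : a % 2 = b % 2) : (-1:ℤ)^a = (-1)^b := by
  rcases Nat.even_or_odd a with ha | ha
  · have hb : Even b := by rw [Nat.even_iff] at *; omega
    rw [ha.neg_one_pow, hb.neg_one_pow]
  · have hb : Odd b := by rw [Nat.odd_iff] at *; omega
    rw [ha.neg_one_pow, hb.neg_one_pow]

lemma pentZ_zero : pentZ 0 = 0 := by
  have := two_pentZ 0
  omega

lemma pent_witness_unique (m : ℤ) (k k' : ℕ) (hk : 0 < k) (hk' : 0 < k')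
    (h : 2*m = 3*(k:ℤ)^2 + k ∨ 2*m = 3*(k:ℤ)^2 - k)
    (h' : 2*m = 3*(k':ℤ)^2 + k' ∨ 2*m = 3*(k':ℤ)^2 - k') : k = k' := by
  rcases h with h | h <;> rcases h' with h' | h'
  · have hz : ((k:ℤ) - k') * (3*((k:ℤ)+k') + 1) = 0 := by linear_combination h' - h
    rcases mul_eq_zero.mp hz with h2 | h2 <;> omega
  · have hz : ((k:ℤ) + k') * (3*((k:ℤ)-k') + 1) = 0 := by linear_combination h' - h
    rcases mul_eq_zero.mp hz with h2 | h2 <;> omega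
  · have hz : ((k:ℤ) + k') * (3*((k:ℤ)-k') - 1) = 0 := by linear_combination h' - h
    rcases mul_eq_zero.mp hz with h2 | h2 <;> omega
  · have hz : ((k:ℤ) - k') * (3*((k:ℤ)+k') - 1) = 0 := by linear_combination h' - h
    rcases mul_eq_zero.mp hz with h2 | h2 <;> omega

lemma pentaCoeff_of_pent (n : ℕ) (i : ℤ) (hi : pentZ i = n) :
    pentaCoeff n = (-1:ℤ)^(i.natAbs) := by
  by_cases h0 : (n:ℤ) = 0
  · have hiz : i = 0 := pentZ_inj (by rw [hi, h0, pentZ_zero])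
    rw [pentaCoeff, if_pos h0, hiz]
    rfl
  · have hi0 : i ≠ 0 := by
      intro h
      rw [h, pentZ_zero] at hi
      exact h0 hi.symm
    set k := i.natAbs with hkdef
    have hk : 0 < k := Int.natAbs_pos.mpr hi0
    have h2 := two_pentZ i
    have hcase : 2*(n:ℤ) = 3*(k:ℤ)^2 + k ∨ 2*(n:ℤ) = 3*(k:ℤ)^2 - k := by
      rcases le_or_gt 0 i with hih | hih
      · left
        have hki : (k:ℤ) = i := Int.natAbs_of_nonneg hih
        rw [hki]
        rw [hi] at h2
        linarith
      · right
        have hki : (k:ℤ) = -i := by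
          rw [hkdef, Int.ofNat_natAbs_of_nonpos (le_of_lt hih)]
        rw [hki, hi] at *
        nlinarith [h2]
    have hex : ∃ k : ℕ, 0 < k ∧ (2 * (n:ℤ) = 3 * (k : ℤ) ^ 2 + k ∨ 2 * (n:ℤ) = 3 * (k : ℤ) ^ 2 - k) :=
      ⟨k, hk, hcase⟩
    rw [pentaCoeff, if_neg h0, dif_pos hex]
    have hspec := hex.choose_spec
    have : hex.choose = k := pent_witness_unique (n:ℤ) hex.choose k hspec.1 hk hspec.2 hcase
    rw [this]

lemma pentaCoeff_of_not_pent (n : ℕ) (hne : ∀ i : ℤ, pentZ i ≠ n) :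
    pentaCoeff n = 0 := by
  have h0 : (n:ℤ) ≠ 0 := by
    intro h
    exact hne 0 (by rw [pentZ_zero, h])
  rw [pentaCoeff, if_neg h0]
  rw [dif_neg]
  rintro ⟨k, hk, hcase⟩
  rcases hcase with h | h
  · refine hne (k:ℤ) ?_
    have h2 := two_pentZ (k:ℤ)
    linarith
  · refine hne (-(k:ℤ)) ?_
    have h2 := two_pentZ (-(k:ℤ))
    nlinarith [h2]

lemma coeff_Phi (N n : ℕ) (hn : n < N) : (Phi N).coeff n = pentaCoeff n := by
  rw [Phi, finset_sum_coeff]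
  have hterm : ∀ r ∈ range (2*N+1),
      (Polynomial.C ((-1:ℤ)^(N+r)) * X ^ ((pentZ ((r:ℤ) - N)).toNat)).coeff n
      = if pentZ ((r:ℤ) - N) = n then (-1:ℤ)^(N+r) else 0 := by
    intro r _
    rw [coeff_C_mul, coeff_X_pow]
    have : (n = (pentZ ((r:ℤ) - N)).toNat) ↔ (pentZ ((r:ℤ) - N) = n) := by
      have := pentZ_nonneg ((r:ℤ) - N)
      omega
    by_cases h : pentZ ((r:ℤ) - N) = n
    · rw [if_pos (this.mpr h), if_pos h, mul_one]
    · rw [if_neg (fun hh => h (this.mp hh)), if_neg h, mul_zero]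
  rw [Finset.sum_congr rfl hterm]
  by_cases hex : ∃ i : ℤ, pentZ i = n
  · obtain ⟨i, hi⟩ := hex
    have hiabs : |i| < N := by
      have h1 := sq_le_pentZ i
      have h2 : i^2 < (N:ℤ) := by omega
      have h3 : |i|^2 < (N:ℤ) := by rw [sq_abs]; omega
      nlinarith [abs_nonneg i]
    set r0 : ℕ := (N + i).toNat with hr0
    have hr0Z : (r0:ℤ) = N + i := by
      rw [hr0]
      rcases abs_cases i with ⟨h1, _⟩ | ⟨h1, _⟩ <;> omega
    have hr0mem : r0 ∈ range (2*N+1) := by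
      rw [Finset.mem_range]
      rcases abs_cases i with ⟨h1, _⟩ | ⟨h1, _⟩ <;> omega
    rw [Finset.sum_eq_single r0]
    · rw [if_pos (by rw [hr0Z]; simpa using hi)]
      rw [pentaCoeff_of_pent n i hi]
      apply neg_one_pow_congr
      omega
    · intro r hr hne
      rw [if_neg]
      intro hcon
      apply hne
      have : (r:ℤ) - N = i := pentZ_inj (by rw [hcon, hi])
      omega
    · intro hcon
      exact absurd hr0mem hcon
  · push_neg at hex
    rw [Finset.sum_eq_zero, (pentaCoeff_of_not_pent n (fun i => hex i)).symm]
    intro r _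
    rw [if_neg (hex _)]

lemma prod_one_add (s : Finset ℕ) :
    ∏ i ∈ s, (1 + (X:Polynomial ℤ)^i) = ∑ t ∈ s.powerset, X^(∑ i ∈ t, i) := by
  calc ∏ i ∈ s, (1 + (X:Polynomial ℤ)^i) = ∏ i ∈ s, ((X:Polynomial ℤ)^i + 1) := by
        exact Finset.prod_congr rfl fun i _ => by ring
    _ = ∑ t ∈ s.powerset, (∏ i ∈ t, (X:Polynomial ℤ)^i) * ∏ i ∈ s \ t, 1 :=
        Finset.prod_add _ _ s
    _ = ∑ t ∈ s.powerset, X^(∑ i ∈ t, i) := by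
        refine Finset.sum_congr rfl fun t _ => ?_
        rw [Finset.prod_const_one, mul_one, Finset.prod_pow_eq_pow_sum]

lemma coeff_D (M m : ℕ) :
    (D M).coeff m = (((Ioc 0 M).powerset.filter (fun t => ∑ i ∈ t, i = m)).card : ℤ) := by
  rw [D, prod_one_add, finset_sum_coeff]
  have : ∀ t ∈ (Ioc 0 M).powerset, ((X:Polynomial ℤ)^(∑ i ∈ t, i)).coeff m
      = if ∑ i ∈ t, i = m then 1 else 0 := by
    intro t _
    rw [coeff_X_pow]
    by_cases h : ∑ i ∈ t, i = m
    · rw [if_pos h, if_pos h.symm]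
    · rw [if_neg h, if_neg (fun hh => h hh.symm)]
  rw [Finset.sum_congr rfl this, Finset.sum_boole]

lemma distinct_card (m M : ℕ) (h : m ≤ M) :
    distinctPartitions m = ((Ioc 0 M).powerset.filter (fun t => ∑ i ∈ t, i = m)).card := by
  apply Finset.card_bij (fun p _ => p.parts.toFinset)
  · -- maps into
    intro p hp
    have hnd : p.parts.Nodup := (Finset.mem_filter.mp hp).2
    rw [Finset.mem_filter, Finset.mem_powerset]
    constructor
    · intro e he
      rw [Multiset.mem_toFinset] at he
      have hpos := p.parts_pos he
      have hle : e ≤ p.parts.sum := Multiset.single_le_sum (fun x _ => Nat.zero_le x) e he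
      rw [p.parts_sum] at hle
      rw [Finset.mem_Ioc]
      exact ⟨hpos, le_trans hle h⟩
    · have hded : p.parts.dedup = p.parts := Multiset.dedup_eq_self.mpr hnd
      have : ∑ i ∈ p.parts.toFinset, i = p.parts.sum := by
        rw [Finset.sum]
        show (Multiset.map id p.parts.toFinset.val).sum = _
        rw [Multiset.map_id]
        show p.parts.dedup.sum = p.parts.sum
        rw [hded]
      rw [this, p.parts_sum]
  · -- injective
    intro p hp q hq hpq
    have hndp : p.parts.Nodup := (Finset.mem_filter.mp hp).2
    have hndq : q.parts.Nodup := (Finset.mem_filter.mp hq).2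
    have h1 : p.parts = q.parts := by
      have e1 : p.parts.toFinset.val = p.parts := by
        show p.parts.dedup = p.parts
        exact Multiset.dedup_eq_self.mpr hndp
      have e2 : q.parts.toFinset.val = q.parts := by
        show q.parts.dedup = q.parts
        exact Multiset.dedup_eq_self.mpr hndq
      rw [← e1, ← e2, hpq]
    exact Nat.Partition.ext h1
  · -- surjective
    intro t ht
    rw [Finset.mem_filter, Finset.mem_powerset] at ht
    obtain ⟨hsub, hsum⟩ := ht
    have hpos : ∀ e ∈ t.val, 0 < e := by
      intro e he
      exact (Finset.mem_Ioc.mp (hsub he)).1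
    have hsum' : t.val.sum = m := by
      rw [← hsum, Finset.sum]
      show _ = (Multiset.map id t.val).sum
      rw [Multiset.map_id]
    refine ⟨⟨t.val, fun {e} he => hpos e he, hsum'⟩, ?_, ?_⟩
    · rw [Finset.mem_filter]
      exact ⟨Finset.mem_univ _, t.nodup⟩
    · show Multiset.toFinset t.val = t
      ext e
      rw [Multiset.mem_toFinset]
      rfl

lemma coeff_D_dp (N m : ℕ) (h : m ≤ N) : (D N).coeff m = (distinctPartitions m : ℤ) := by
  rw [coeff_D, ← distinct_card m N h]

lemma sum_shift (N : ℕ) (g : ℤ → ℤ) :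
    ∑ r ∈ range (2*N+1), g ((r:ℤ) - N) = g 0 + ∑ i ∈ Icc 1 N, (g i + g (-(i:ℤ))) := by
  induction N with
  | zero => simp
  | succ M ih =>
      have h1 : 2*(M+1)+1 = (2*M+2)+1 := by ring
      rw [h1, Finset.sum_range_succ']
      have h2 : ∀ r ∈ range (2*M+2), g ((↑(r+1):ℤ) - (↑(M+1):ℕ)) = g ((r:ℤ) - M) := by
        intro r _
        congr 1
        push_cast
        ring
      rw [Finset.sum_congr rfl h2, Finset.sum_range_succ, ih]
      have h3 : g ((↑(2*M+1):ℤ) - M) = g (M+1) := by congr 1; push_cast; try ring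
      rw [h3]
      rw [Finset.sum_Icc_succ_top (by omega : 1 ≤ M+1)]
      have h5 := congrArg g (show ((0:ℤ) - ((M+1):ℕ)) = -(((M+1):ℕ):ℤ) by push_cast; ring)
      push_cast
      push_cast at h5
      rw [h5]
      ring

lemma coeff_ThetaD (N n : ℕ) (h : n ≤ N) :
    (Theta N * D N).coeff n
      = (distinctPartitions n : ℤ) +
          2 * ∑ i ∈ Icc 1 N,
            (-1:ℤ)^i * (if i^2 ≤ n then (distinctPartitions (n - i^2) : ℤ) else 0) := by
  rw [Theta, Finset.sum_mul, finset_sum_coeff]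
  set G : ℤ → ℤ := fun i => (-1:ℤ)^(i.natAbs) *
    (if (i^2).toNat ≤ n then (D N).coeff (n - (i^2).toNat) else 0) with hG
  have hterm : ∀ r ∈ range (2*N+1),
      (Polynomial.C ((-1:ℤ)^(N+r)) * X ^ ((((r:ℤ) - N)^2).toNat) * D N).coeff n
        = G ((r:ℤ) - N) := by
    intro r _
    rw [mul_assoc, coeff_C_mul, mul_comm ((X:Polynomial ℤ) ^ ((((r:ℤ) - N)^2).toNat)) (D N),
      Polynomial.coeff_mul_X_pow']
    rw [hG]
    have hsign : (-1:ℤ)^(N+r) = (-1)^(((r:ℤ) - N).natAbs) := by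
      apply neg_one_pow_congr
      omega
    rw [hsign]
  rw [Finset.sum_congr rfl hterm, sum_shift N G]
  have hG0 : G 0 = (distinctPartitions n : ℤ) := by
    rw [hG]
    norm_num
    rw [coeff_D_dp N n h]
  have hGi : ∀ i ∈ Icc 1 N, G i + G (-(i:ℤ))
      = 2 * ((-1:ℤ)^i * (if i^2 ≤ n then (distinctPartitions (n - i^2) : ℤ) else 0)) := by
    intro i hi
    rw [hG]
    have e1 : ((i:ℤ)^2).toNat = i^2 := by
      have : ((i:ℤ))^2 = ((i^2 : ℕ) : ℤ) := by push_cast; ring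
      rw [this, Int.toNat_natCast]
    have e2 : ((-(i:ℤ))^2).toNat = i^2 := by rw [neg_sq]; exact e1
    have e3 : ((i:ℤ)).natAbs = i := Int.natAbs_natCast i
    have e4 : (-(i:ℤ)).natAbs = i := by rw [Int.natAbs_neg]; exact e3
    simp only [e1, e2, e3, e4]
    by_cases hsq : i^2 ≤ n
    · rw [if_pos hsq, if_pos hsq, coeff_D_dp N (n - i^2) (by omega)]
      ring
    · rw [if_neg hsq, if_neg hsq]
      ring
  rw [hG0, Finset.sum_congr rfl hGi, ← Finset.mul_sum]

lemma square_sum (N n : ℕ) (h : n ≤ N) :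
    ∑ i ∈ Icc 1 N, (-1:ℤ)^i * (if i^2 ≤ n then (distinctPartitions (n - i^2) : ℤ) else 0)
      = ∑ k ∈ Icc 1 n,
          (-1:ℤ)^k * (if IsSquare k then (1:ℤ) else 0) * (distinctPartitions (n - k) : ℤ) := by
  have hL : ∀ i ∈ Icc 1 N, (-1:ℤ)^i * (if i^2 ≤ n then (distinctPartitions (n - i^2) : ℤ) else 0)
      = if i^2 ≤ n then (-1:ℤ)^i * (distinctPartitions (n - i^2) : ℤ) else 0 := by
    intro i _
    by_cases hc : i^2 ≤ n
    · rw [if_pos hc, if_pos hc]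
    · rw [if_neg hc, if_neg hc, mul_zero]
  have hR : ∀ k ∈ Icc 1 n,
      (-1:ℤ)^k * (if IsSquare k then (1:ℤ) else 0) * (distinctPartitions (n - k) : ℤ)
      = if IsSquare k then (-1:ℤ)^k * (distinctPartitions (n - k) : ℤ) else 0 := by
    intro k _
    by_cases hc : IsSquare k
    · rw [if_pos hc, if_pos hc, mul_one]
    · rw [if_neg hc, if_neg hc, mul_zero, zero_mul]
  rw [Finset.sum_congr rfl hL, Finset.sum_congr rfl hR, ← Finset.sum_filter, ← Finset.sum_filter]
  refine Finset.sum_nbij' (fun i => i^2) (fun k => Nat.sqrt k) ?_ ?_ ?_ ?_ ?_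
  · intro i hi
    simp only [Finset.mem_filter, Finset.mem_Icc] at hi ⊢
    have h1i : 0 < i := hi.1.1
    exact ⟨⟨pow_pos h1i 2, hi.2⟩, ⟨i, by ring⟩⟩
  · intro k hk
    simp only [Finset.mem_filter, Finset.mem_Icc] at hk ⊢
    obtain ⟨⟨hk1, hk2⟩, r, hr⟩ := hk
    have hsq : Nat.sqrt k = r := by
      have hrr : r * r = r^2 := by ring
      rw [hr, hrr, Nat.sqrt_eq']
    have hr1 : 1 ≤ r := by
      rcases Nat.eq_zero_or_pos r with h0 | h0
      · rw [h0] at hr; omega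
      · omega
    have hrk : r ≤ k := by rw [hr]; exact Nat.le_mul_of_pos_left r hr1
    constructor
    · constructor <;> omega
    · rw [hsq]
      have : r^2 = k := by rw [hr]; ring
      omega
  · intro i hi
    simp only [Finset.mem_filter, Finset.mem_Icc] at hi
    show Nat.sqrt (i^2) = i
    rw [Nat.sqrt_eq']
  · intro k hk
    simp only [Finset.mem_filter, Finset.mem_Icc] at hk
    obtain ⟨⟨hk1, hk2⟩, r, hr⟩ := hk
    have hsq : Nat.sqrt k = r := by
      have hrr : r * r = r^2 := by ring
      rw [hr, hrr, Nat.sqrt_eq']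
    show (Nat.sqrt k)^2 = k
    rw [hsq, hr]
    ring
  · intro i hi
    simp only [Finset.mem_filter, Finset.mem_Icc] at hi
    have hpar : (i^2) % 2 = i % 2 := by
      have hpm := Nat.pow_mod i 2 2
      have h2 : i % 2 = 0 ∨ i % 2 = 1 := by omega
      rcases h2 with h2 | h2 <;> rw [h2] at hpm <;> norm_num at hpm <;> omega
    rw [neg_one_pow_congr hpar]

end EulerAux

theorem euler_type_distinctPartitions (n : ℕ) :
    (distinctPartitions n : ℤ) +
        2 * ∑ k ∈ Finset.Icc 1 n,
          (-1 : ℤ) ^ k * (if IsSquare k then (1 : ℤ) else 0) * (distinctPartitions (n - k) : ℤ) =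
      pentaCoeff (n : ℤ) := by
  have h1 : n < n + 1 := Nat.lt_succ_self n
  have h2 := EulerAux.main_rel (n+1) n h1
  have h3 := EulerAux.coeff_ThetaD (n+1) n (by omega)
  have h4 := EulerAux.square_sum (n+1) n (by omega)
  have h5 := EulerAux.coeff_Phi (n+1) n h1
  rw [← h5, ← h2, h3, h4]
end

section
/- Let k ≥ 2 and n be positive integers with gcd(k, n) = 1. Then k divides r_k(n), where r_k(n) is the number of representations of n as an ordered sum of k squares of integers, i.e., the number of k-tuples (x_1, …, x_k) of integers with x_1² + ⋯ + x_k² = n. -/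
open Finset

def sqSet (k n : ℕ) [NeZero k] : Set (ZMod k → ℤ) := {w | ∑ i, w i ^ 2 = (n : ℤ)}

instance sqSetAction (k n : ℕ) [NeZero k] : AddAction (ZMod k) (sqSet k n) where
  vadd g w := ⟨fun i => w.1 (i + g), by
    have := w.2
    simp only [sqSet, Set.mem_setOf_eq] at this ⊢
    exact (Fintype.sum_equiv (Equiv.addRight g) _ _ (fun i => rfl)).trans this⟩
  zero_vadd w := by
    ext i; show w.1 (i + 0) = w.1 i; rw [add_zero]
  add_vadd a b w := by
    ext i; show w.1 (i + (a + b)) = w.1 (i + a + b); rw [add_assoc]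

lemma vadd_apply' {k n : ℕ} [NeZero k] (g : ZMod k) (w : sqSet k n) (i : ZMod k) :
    ((g +ᵥ w : sqSet k n) : ZMod k → ℤ) i = (w : ZMod k → ℤ) (i + g) := rfl

lemma invar {k n : ℕ} [NeZero k] {g : ZMod k} {w : sqSet k n} (hg : g +ᵥ w = w) (m : ℤ)
    (i : ZMod k) : (w : ZMod k → ℤ) (i + m • g) = (w : ZMod k → ℤ) i := by
  have h1 : ∀ j : ZMod k, (w : ZMod k → ℤ) (j + g) = (w : ZMod k → ℤ) j := by
    intro j
    conv_rhs => rw [← hg]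
    rfl
  induction m using Int.induction_on with
  | zero => simp
  | succ m ih =>
      have : i + ((m : ℤ) + 1) • g = (i + (m : ℤ) • g) + g := by
        rw [add_smul, one_smul, add_assoc]
      rw [this, h1, ih]
  | pred m ih =>
      have : i + (-(m : ℤ) - 1) • g + g = i + (-(m : ℤ)) • g := by
        rw [sub_smul, one_smul]; abel
      rw [← ih, ← this, h1]

lemma stab_eq_bot {k n : ℕ} [NeZero k] (hn : 0 < n) (h : Nat.gcd k n = 1) (w : sqSet k n) :
    AddAction.stabilizer (ZMod k) w = ⊥ := by
  classical
  rw [eq_bot_iff]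
  intro g hg
  simp only [AddAction.mem_stabilizer_iff] at hg
  simp only [AddSubgroup.mem_bot]
  set d := addOrderOf g with hd
  by_contra hgne
  have hdk : d ∣ k := by
    have := addOrderOf_dvd_card (x := g)
    simpa [ZMod.card] using this
  set H := AddSubgroup.zmultiples g with hH
  have hcardH : Nat.card H = d := Nat.card_zmultiples g
  have hinv : ∀ x y : ZMod k, (QuotientAddGroup.mk (s := H) x = QuotientAddGroup.mk y) →
      (w : ZMod k → ℤ) x = (w : ZMod k → ℤ) y := by
    intro x y hxy
    rw [QuotientAddGroup.eq] at hxy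
    obtain ⟨m, hm⟩ := AddSubgroup.mem_zmultiples_iff.mp hxy
    have := invar hg m x
    rw [hm] at this
    rw [← this, add_neg_cancel_left]
  have key : (d : ℤ) ∣ (n : ℤ) := by
    have hsum : ∑ i : ZMod k, (w : ZMod k → ℤ) i ^ 2 = (n : ℤ) := w.2
    rw [← Fintype.sum_fiberwise (QuotientAddGroup.mk (s := H)) (fun i => (w : ZMod k → ℤ) i ^ 2)]
      at hsum
    refine hsum ▸ Finset.dvd_sum ?_
    intro b _
    have hconst : ∀ x : {x : ZMod k // QuotientAddGroup.mk (s := H) x = b},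
        (w : ZMod k → ℤ) x.1 ^ 2 = (w : ZMod k → ℤ) b.out ^ 2 := by
      intro x
      rw [hinv x.1 b.out (by rw [x.2, QuotientAddGroup.out_eq'])]
    have h1 : (∑ x : {x : ZMod k // QuotientAddGroup.mk (s := H) x = b},
        (w : ZMod k → ℤ) x.1 ^ 2)
        = (Fintype.card {x : ZMod k // QuotientAddGroup.mk (s := H) x = b} : ℤ) *
          (w : ZMod k → ℤ) b.out ^ 2 := by
      rw [Finset.sum_congr rfl fun x _ => hconst x, Finset.sum_const]
      simp [nsmul_eq_mul]
    have h2 : Fintype.card {x : ZMod k // QuotientAddGroup.mk (s := H) x = b} = d := by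
      rw [← Nat.card_eq_fintype_card, ← hcardH]
      apply Nat.card_congr
      exact ⟨fun x => ⟨-b.out + x.1,
               by rw [← QuotientAddGroup.eq, x.2, QuotientAddGroup.out_eq']⟩,
             fun hh => ⟨b.out + hh.1, by
               rw [eq_comm, ← QuotientAddGroup.out_eq' b, QuotientAddGroup.eq]
               simpa using hh.2⟩,
             fun x => by ext; simp,
             fun hh => by ext; simp⟩
    rw [h1, h2]
    exact dvd_mul_right _ _
  have hdn : d ∣ n := Int.ofNat_dvd.mp key
  have : d ∣ 1 := h ▸ Nat.dvd_gcd hdk hdn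
  have hd1 : d = 1 := Nat.dvd_one.mp this
  exact hgne (AddMonoid.addOrderOf_eq_one_iff.mp hd1)

lemma sqSet_finite (k n : ℕ) [NeZero k] : (sqSet k n).Finite := by
  apply Set.Finite.subset (Set.Finite.pi (fun i : ZMod k => Set.finite_Icc (-(n : ℤ)) n))
  intro w hw
  simp only [Set.mem_pi, Set.mem_univ, Set.mem_Icc, forall_true_left]
  intro i
  have h1 : w i ^ 2 ≤ (n : ℤ) := by
    rw [← hw]
    exact Finset.single_le_sum (fun j _ => sq_nonneg (w j)) (Finset.mem_univ i)
  have h0 : (0 : ℤ) ≤ n := Int.natCast_nonneg n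
  constructor <;> nlinarith [sq_nonneg (w i + n), sq_nonneg (w i - n)]

lemma card_dvd (k n : ℕ) [NeZero k] (hn : 0 < n) (h : Nat.gcd k n = 1) :
    k ∣ Nat.card (sqSet k n) := by
  classical
  have hfin : (sqSet k n).Finite := sqSet_finite k n
  haveI : Finite (sqSet k n) := hfin
  have e := AddAction.selfEquivSigmaOrbitsQuotientStabilizer (ZMod k) (sqSet k n)
  have e2 : (sqSet k n) ≃ (AddAction.orbitRel.Quotient (ZMod k) (sqSet k n)) × ZMod k := by
    refine e.trans ((Equiv.sigmaCongrRight fun ω => ?_).trans (Equiv.sigmaEquivProd _ _))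
    exact ((QuotientAddGroup.quotientAddEquivOfEq (stab_eq_bot hn h _)).trans
      QuotientAddGroup.quotientBot).toEquiv
  rw [Nat.card_congr e2, Nat.card_prod, Nat.card_zmod]
  exact dvd_mul_left _ _


/-- `rSquares k n` is the number of `k`-tuples `(x₁, …, x_k)` of integers with
`x₁² + ⋯ + x_k² = n`. -/
noncomputable def rSquares (k n : ℕ) : ℕ :=
  Set.ncard {v : Fin k → ℤ | ∑ i, v i ^ 2 = (n : ℤ)}

theorem sum_of_squares_congruence (k n : ℕ) (hk : 2 ≤ k) (hn : 0 < n)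
    (h : Nat.gcd k n = 1) : k ∣ rSquares k n := by

  haveI : NeZero k := ⟨by omega⟩
  have e : ZMod k ≃ Fin k := Fintype.equivFinOfCardEq (ZMod.card k)
  have E : {v : Fin k → ℤ | ∑ i, v i ^ 2 = (n : ℤ)} ≃ sqSet k n := by
    refine Equiv.subtypeEquiv (Equiv.arrowCongr e.symm (Equiv.refl ℤ)) fun v => ?_
    simp only [Set.mem_setOf_eq, sqSet]
    have hs : ∑ i : Fin k, v i ^ 2
        = ∑ j : ZMod k, ((Equiv.arrowCongr e.symm (Equiv.refl ℤ)) v) j ^ 2 := by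
      refine Fintype.sum_equiv e.symm _ _ (fun j => ?_)
      simp
    rw [hs]
  rw [rSquares, ← Nat.card_coe_set_eq, Nat.card_congr E]
  exact card_dvd k n hn h
end
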